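/- arXiv:1604.04156 — 6 statements merged into one kernel-verified Lean document; each statement's English description precedes it below -/
import Mathlib

section
/- Let C₁ and C₂ be closed convex cones in real Banach spaces E₁ and E₂ respectively, and let L : E₁ → E₂ be a linear operator with L(C₁) ⊆ C₂. If Δ := sup{Θ_{C₂}(L v, L w) : v, w ∈ C₁} (the Θ_{C₂}-diameter of L(C₁)) is finite and strictly positive, then for all φ, ψ ∈ C₁ one has Θ_{C₂}(Lφ, Lψ) ≤ (1 − e^{−Δ}) · Θ_{C₁}(φ, ψ). -/
open Set
open scoped ENNReal

noncomputable section

/-- A (convex) cone in a real normed space: a convex subset of `E \ {0}`,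
closed under multiplication by positive scalars, with `C ∩ (-C) = ∅`, and
such that `C ∪ {0}` is a closed subset of `E`. -/
def IsClosedCone {E : Type*} [NormedAddCommGroup E] [NormedSpace ℝ E] (C : Set E) : Prop :=
  Convex ℝ C ∧ (0 : E) ∉ C ∧ (∀ t : ℝ, 0 < t → ∀ v ∈ C, t • v ∈ C) ∧
    C ∩ (-C) = ∅ ∧ IsClosed (insert (0 : E) C)

/-- The projective (Hilbert/Birkhoff) metric of a closed cone `C`, with values in `[0,+∞]`.
For `v, w ∈ C` it equals `log (B_C(v,w) / A_C(v,w))` where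
`A_C(v,w) = sup {t > 0 : w - t•v ∈ C ∪ {0}}` and `B_C(v,w) = inf {s > 0 : s•v - w ∈ C ∪ {0}}`;
it is `+∞` when `A_C = 0` (no admissible `t`) or `B_C = +∞` (no admissible `s`). -/
def coneTheta {E : Type*} [NormedAddCommGroup E] [NormedSpace ℝ E] (C : Set E) (v w : E) :
    ℝ≥0∞ :=
  ⨅ (s : ℝ) (_ : 0 < s) (_ : s • v - w ∈ insert (0 : E) C)
    (t : ℝ) (_ : 0 < t) (_ : w - t • v ∈ insert (0 : E) C),
    ENNReal.ofReal (Real.log (s / t))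

section Aux

variable {E : Type*} [NormedAddCommGroup E] [NormedSpace ℝ E] {C : Set E}

lemma insert_add_mem (hC : IsClosedCone C) {x y : E}
    (hx : x ∈ insert (0:E) C) (hy : y ∈ insert (0:E) C) : x + y ∈ insert (0:E) C := by
  obtain ⟨hconv, -, hsmul, -, -⟩ := hC
  rcases hx with rfl | hx
  · simpa using hy
  rcases hy with rfl | hy
  · simpa using Or.inr hx
  right
  have hmid := hconv hx hy (by norm_num : (0:ℝ) ≤ 1/2) (by norm_num : (0:ℝ) ≤ 1/2) (by norm_num)
  have h2 := hsmul 2 (by norm_num) _ hmid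
  convert h2 using 1
  module

lemma insert_smul_mem (hC : IsClosedCone C) {r : ℝ} (hr : 0 < r)
    {x : E} (hx : x ∈ insert (0:E) C) : r • x ∈ insert (0:E) C := by
  rcases hx with rfl | hx
  · simp
  · exact Or.inr (hC.2.2.1 r hr x hx)

lemma le_of_cone_mem (hC : IsClosedCone C) {v w : E} (hv : v ∈ C)
    {s t : ℝ} (hs : 0 < s) (ht : 0 < t)
    (hb : s • v - w ∈ insert (0:E) C) (ha : w - t • v ∈ insert (0:E) C) : t ≤ s := by
  by_contra hlt
  push_neg at hlt
  have hv0 : v ≠ 0 := fun h0 => hC.2.1 (h0 ▸ hv)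
  have hsum : (s - t) • v ∈ insert (0:E) C := by
    have h := insert_add_mem hC hb ha
    convert h using 1
    module
  have hne : (s - t) • v ≠ 0 := smul_ne_zero (by linarith) hv0
  have hmem : (s - t) • v ∈ C := by
    rcases hsum with h0 | h
    · exact absurd h0 hne
    · exact h
  have hneg : (t - s) • v ∈ C := hC.2.2.1 (t - s) (by linarith) v hv
  have hcontra : (s - t) • v ∈ C ∩ (-C) := by
    refine ⟨hmem, Set.mem_neg.mpr ?_⟩
    have : -((s - t) • v) = (t - s) • v := by module
    rw [this]
    exact hneg
  rw [hC.2.2.2.1] at hcontra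
  exact hcontra

lemma coneTheta_le {v w : E} {s t : ℝ} (hs : 0 < s) (ht : 0 < t)
    (h1 : s • v - w ∈ insert (0:E) C) (h2 : w - t • v ∈ insert (0:E) C) :
    coneTheta C v w ≤ ENNReal.ofReal (Real.log (s / t)) :=
  iInf_le_of_le s <| iInf_le_of_le hs <| iInf_le_of_le h1 <| iInf_le_of_le t <|
    iInf_le_of_le ht <| iInf_le_of_le h2 le_rfl

end Aux

/-- Key analytic inequality via monotonicity. -/
lemma birkhoff_key {τ σ : ℝ} (hτ : 0 < τ) (hτσ : τ ≤ σ) {μ : ℝ} (hμ : 1 ≤ μ) :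
    Real.log (1+σ) - Real.log (1+τ) ≤
      (1 - τ/σ) * Real.log μ - Real.log (μ+τ) + Real.log (μ+σ) := by
  have hσ : 0 < σ := lt_of_lt_of_le hτ hτσ
  set c : ℝ := 1 - τ/σ with hcdef
  have hc : 0 ≤ c := by
    have : τ/σ ≤ 1 := (div_le_one hσ).mpr hτσ
    simp only [hcdef]; linarith
  set h : ℝ → ℝ := fun x => c * Real.log x - Real.log (x+τ) + Real.log (x+σ) with hh
  have hd : ∀ x : ℝ, 0 < x → HasDerivAt h (c / x - 1/(x+τ) + 1/(x+σ)) x := by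
    intro x hx
    have l1 : HasDerivAt (fun y : ℝ => Real.log y) x⁻¹ x := Real.hasDerivAt_log hx.ne'
    have l2 : HasDerivAt (fun y : ℝ => Real.log (y+τ)) (x+τ)⁻¹ x := by
      have := (Real.hasDerivAt_log (by positivity : x+τ ≠ 0)).comp x
        ((hasDerivAt_id x).add_const τ)
      simpa [Function.comp_def] using this
    have l3 : HasDerivAt (fun y : ℝ => Real.log (y+σ)) (x+σ)⁻¹ x := by
      have := (Real.hasDerivAt_log (by positivity : x+σ ≠ 0)).comp x
        ((hasDerivAt_id x).add_const σ)
      simpa [Function.comp_def] using this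
    have := ((l1.const_mul c).sub l2).add l3
    convert this using 1
    · rfl
    · rfl
    · rfl
    · ring
  have hmono : MonotoneOn h (Set.Ici (1:ℝ)) := by
    apply monotoneOn_of_deriv_nonneg (convex_Ici 1)
    · intro x hx
      exact (hd x (lt_of_lt_of_le zero_lt_one hx)).continuousAt.continuousWithinAt
    · intro x hx
      rw [interior_Ici] at hx
      exact ((hd x (lt_trans zero_lt_one hx)).differentiableAt).differentiableWithinAt
    · intro x hx
      rw [interior_Ici] at hx
      have hx0 : (0:ℝ) < x := lt_trans zero_lt_one hx
      rw [(hd x hx0).deriv]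
      have e1 : 1/(x+τ) - 1/(x+σ) = (σ-τ)/((x+τ)*(x+σ)) := by
        field_simp
        ring
      have e2 : c / x = (σ-τ)/(σ*x) := by
        rw [hcdef]
        field_simp
      have e3 : (σ-τ)/((x+τ)*(x+σ)) ≤ (σ-τ)/(σ*x) := by
        apply div_le_div_of_nonneg_left (by linarith) (by positivity)
        nlinarith
      linarith [e1, e2, e3]
  have := hmono (self_mem_Ici) (by exact hμ : μ ∈ Set.Ici (1:ℝ)) hμ
  simp only [hh, Real.log_one, mul_zero] at this
  linarith

/-- If `L : E₁ → E₂` is linear with `L(C₁) ⊆ C₂` and the `Θ_{C₂}`-diameter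
`Δ` of `L(C₁)` is finite and strictly positive, then
`Θ_{C₂}(Lφ, Lψ) ≤ (1 - e^{-Δ}) · Θ_{C₁}(φ, ψ)` for all `φ, ψ ∈ C₁`. -/
theorem cone_contraction {E₁ E₂ : Type*}
    [NormedAddCommGroup E₁] [NormedSpace ℝ E₁] [CompleteSpace E₁]
    [NormedAddCommGroup E₂] [NormedSpace ℝ E₂] [CompleteSpace E₂]
    (C₁ : Set E₁) (C₂ : Set E₂) (h₁ : IsClosedCone C₁) (h₂ : IsClosedCone C₂)
    (L : E₁ →ₗ[ℝ] E₂) (hL : ∀ v ∈ C₁, L v ∈ C₂)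
    (Δ : ℝ≥0∞)
    (hΔ : Δ = ⨆ (v : E₁) (_ : v ∈ C₁) (w : E₁) (_ : w ∈ C₁), coneTheta C₂ (L v) (L w))
    (hΔfin : Δ ≠ ⊤) (hΔpos : 0 < Δ) :
    ∀ φ ∈ C₁, ∀ ψ ∈ C₁,
      coneTheta C₂ (L φ) (L ψ) ≤
        ENNReal.ofReal (1 - Real.exp (-Δ.toReal)) * coneTheta C₁ φ ψ := by
  intro φ hφ ψ hψ
  have hΔR : 0 < Δ.toReal := ENNReal.toReal_pos hΔpos.ne' hΔfin
  have hcpos : 0 < 1 - Real.exp (-Δ.toReal) := by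
    have : Real.exp (-Δ.toReal) < 1 := Real.exp_lt_one_iff.mpr (by linarith)
    linarith
  by_cases hfin : coneTheta C₁ φ ψ = ⊤
  · rw [hfin, ENNReal.mul_top (ne_of_gt (ENNReal.ofReal_pos.mpr hcpos))]
    exact le_top
  set T1 := (coneTheta C₁ φ ψ).toReal with hT1
  have key : ∀ δ : ℝ, 0 < δ →
      coneTheta C₂ (L φ) (L ψ) ≤
        ENNReal.ofReal ((1 - Real.exp (-(Δ.toReal + δ))) * (T1 + δ)) := by
    intro δ hδ
    have hgδ : 0 ≤ 1 - Real.exp (-(Δ.toReal + δ)) := by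
      have : Real.exp (-(Δ.toReal + δ)) ≤ 1 := Real.exp_le_one_iff.mpr (by linarith)
      linarith
    have hlt : coneTheta C₁ φ ψ < ENNReal.ofReal (T1 + δ) := by
      rw [ENNReal.ofReal_add ENNReal.toReal_nonneg hδ.le, ENNReal.ofReal_toReal hfin]
      exact ENNReal.lt_add_right hfin (ne_of_gt (ENNReal.ofReal_pos.mpr hδ))
    unfold coneTheta at hlt
    simp only [iInf_lt_iff] at hlt
    obtain ⟨s, hs, hsmem, t, ht, htmem, hlog⟩ := hlt
    have hts : t ≤ s := le_of_cone_mem h₁ hφ hs ht hsmem htmem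
    have hμ1 : 1 ≤ s / t := (one_le_div ht).mpr hts
    have hlognn : 0 ≤ Real.log (s / t) := Real.log_nonneg hμ1
    have hlogR : Real.log (s / t) < T1 + δ := by
      have hpos : 0 < T1 + δ := by
        have : 0 ≤ T1 := ENNReal.toReal_nonneg
        linarith
      exact (ENNReal.ofReal_lt_ofReal_iff hpos).mp hlog
    -- special cases where ψ is a positive multiple of φ
    rcases hsmem with h0 | hsC
    · -- s•φ - ψ = 0
      have hψφ : L ψ = s • L φ := by
        have : ψ = s • φ := by
          have := sub_eq_zero.mp h0
          rw [← this]
        rw [this, map_smul]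
      have : coneTheta C₂ (L φ) (L ψ) ≤ ENNReal.ofReal (Real.log (s / s)) :=
        coneTheta_le hs hs (by simp [hψφ]) (by simp [hψφ])
      simp only [div_self hs.ne', Real.log_one, ENNReal.ofReal_zero] at this
      exact le_trans this zero_le
    rcases htmem with h0 | htC
    · have hψφ : L ψ = t • L φ := by
        have : ψ = t • φ := by
          have := sub_eq_zero.mp h0
          rw [this]
        rw [this, map_smul]
      have : coneTheta C₂ (L φ) (L ψ) ≤ ENNReal.ofReal (Real.log (t / t)) :=
        coneTheta_le ht ht (by simp [hψφ]) (by simp [hψφ])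
      simp only [div_self ht.ne', Real.log_one, ENNReal.ofReal_zero] at this
      exact le_trans this zero_le
    -- main case
    set u₁ : E₁ := s • φ - ψ with hu₁
    set u₂ : E₁ := ψ - t • φ with hu₂
    have hu₁C : u₁ ∈ C₁ := hsC
    have hu₂C : u₂ ∈ C₁ := htC
    have hΔle : coneTheta C₂ (L u₂) (L u₁) ≤ Δ := by
      rw [hΔ]
      exact le_iSup_of_le u₂ (le_iSup_of_le hu₂C (le_iSup_of_le u₁ (le_iSup_of_le hu₁C le_rfl)))
    have hΔlt : coneTheta C₂ (L u₂) (L u₁) < ENNReal.ofReal (Δ.toReal + δ) := by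
      calc coneTheta C₂ (L u₂) (L u₁) ≤ Δ := hΔle
        _ < ENNReal.ofReal (Δ.toReal + δ) := by
            rw [ENNReal.ofReal_add ENNReal.toReal_nonneg hδ.le, ENNReal.ofReal_toReal hΔfin]
            exact ENNReal.lt_add_right hΔfin (ne_of_gt (ENNReal.ofReal_pos.mpr hδ))
    unfold coneTheta at hΔlt
    simp only [iInf_lt_iff] at hΔlt
    obtain ⟨σ, hσ, hσmem, τ, hτ, hτmem, hlogστ⟩ := hΔlt
    have hτσ : τ ≤ σ := le_of_cone_mem h₂ (hL u₂ hu₂C) hσ hτ hσmem hτmem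
    have hlogστR : Real.log (σ / τ) < Δ.toReal + δ := by
      have hpos : 0 < Δ.toReal + δ := by linarith
      exact (ENNReal.ofReal_lt_ofReal_iff hpos).mp hlogστ
    -- τ/σ > exp(-(Δ.toReal+δ))
    have hστexp : Real.exp (-(Δ.toReal + δ)) ≤ τ / σ := by
      have hστpos : 0 < σ / τ := by positivity
      have h1 : σ / τ < Real.exp (Δ.toReal + δ) := by
        calc σ / τ = Real.exp (Real.log (σ / τ)) := (Real.exp_log hστpos).symm
          _ < Real.exp (Δ.toReal + δ) := Real.exp_lt_exp.mpr hlogστR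
      have h2 : τ / σ = (σ / τ)⁻¹ := by
        field_simp
      rw [h2, Real.exp_neg]
      exact inv_anti₀ hστpos h1.le
    -- construct witnesses
    have hLu₁ : L u₁ = s • L φ - L ψ := by rw [hu₁, map_sub, map_smul]
    have hLu₂ : L u₂ = L ψ - t • L φ := by rw [hu₂, map_sub, map_smul]
    have h1τ : (0:ℝ) < 1 + τ := by linarith
    have hσ1 : (0:ℝ) < σ + 1 := by linarith
    set s' : ℝ := (s + τ * t) / (1 + τ) with hs'
    set t' : ℝ := (s + σ * t) / (σ + 1) with ht'
    have hs'pos : 0 < s' := by positivity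
    have ht'pos : 0 < t' := by positivity
    have hmem1 : s' • L φ - L ψ ∈ insert (0:E₂) C₂ := by
      have hid : s' • L φ - L ψ = (1 + τ)⁻¹ • (L u₁ - τ • L u₂) := by
        rw [hLu₁, hLu₂, hs']
        match_scalars <;> field_simp <;> ring
      rw [hid]
      exact insert_smul_mem h₂ (by positivity) hτmem
    have hmem2 : L ψ - t' • L φ ∈ insert (0:E₂) C₂ := by
      have hid : L ψ - t' • L φ = (σ + 1)⁻¹ • (σ • L u₂ - L u₁) := by
        rw [hLu₁, hLu₂, ht']
        match_scalars <;> field_simp <;> ring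
      rw [hid]
      exact insert_smul_mem h₂ (by positivity) hσmem
    have hbound : coneTheta C₂ (L φ) (L ψ) ≤ ENNReal.ofReal (Real.log (s' / t')) :=
      coneTheta_le hs'pos ht'pos hmem1 hmem2
    refine le_trans hbound (ENNReal.ofReal_le_ofReal ?_)
    -- log(s'/t') ≤ (1-τ/σ) log(s/t) ≤ (1 - exp(-(Δ.toReal+δ))) (T1 + δ)
    set μ : ℝ := s / t with hμdef
    have hkey := birkhoff_key hτ hτσ hμ1
    have hσpos : 0 < σ := lt_of_lt_of_le hτ hτσ
    have hlog1 : Real.log (s' / t') =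
        Real.log (μ + τ) - Real.log (1 + τ) - Real.log (μ + σ) + Real.log (1 + σ) := by
      have e1 : s + τ * t = t * (μ + τ) := by
        rw [hμdef]; field_simp
      have e2 : s + σ * t = t * (μ + σ) := by
        rw [hμdef]; field_simp
      have hμτ : 0 < μ + τ := by linarith
      have hμσ : 0 < μ + σ := by linarith
      rw [hs', ht', e1, e2]
      rw [Real.log_div (by positivity) (by positivity),
          Real.log_div (by positivity) (by positivity),
          Real.log_div (by positivity) (by positivity),
          Real.log_mul (by positivity) (by positivity),
          Real.log_mul (by positivity) (by positivity)]
      have : Real.log (σ + 1) = Real.log (1 + σ) := by ring_nf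
      rw [this]
      ring
    have hstep1 : Real.log (s' / t') ≤ (1 - τ/σ) * Real.log μ := by
      rw [hlog1]; linarith
    have hstep2 : (1 - τ/σ) * Real.log μ ≤
        (1 - Real.exp (-(Δ.toReal + δ))) * (T1 + δ) := by
      have hf1 : 1 - τ/σ ≤ 1 - Real.exp (-(Δ.toReal + δ)) := by linarith
      have hf2 : 0 ≤ 1 - τ/σ := by
        have : τ/σ ≤ 1 := (div_le_one hσpos).mpr hτσ
        linarith
      have hf3 : Real.log μ ≤ T1 + δ := hlogR.le
      calc (1 - τ/σ) * Real.log μ ≤ (1 - Real.exp (-(Δ.toReal + δ))) * Real.log μ :=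
            mul_le_mul_of_nonneg_right hf1 hlognn
        _ ≤ (1 - Real.exp (-(Δ.toReal + δ))) * (T1 + δ) :=
            mul_le_mul_of_nonneg_left hf3 hgδ
    linarith
  -- limit δ → 0⁺
  have hcont : Filter.Tendsto
      (fun δ : ℝ => ENNReal.ofReal ((1 - Real.exp (-(Δ.toReal + δ))) * (T1 + δ)))
      (nhdsWithin 0 (Set.Ioi 0))
      (nhds (ENNReal.ofReal ((1 - Real.exp (-Δ.toReal)) * T1))) := by
    have hc : Continuous fun δ : ℝ => (1 - Real.exp (-(Δ.toReal + δ))) * (T1 + δ) := by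
      fun_prop
    have := (ENNReal.continuous_ofReal.comp hc).tendsto 0
    simp only [Function.comp, add_zero] at this
    exact this.mono_left nhdsWithin_le_nhds
  have hev : ∀ᶠ δ in nhdsWithin (0:ℝ) (Set.Ioi 0),
      coneTheta C₂ (L φ) (L ψ) ≤
        ENNReal.ofReal ((1 - Real.exp (-(Δ.toReal + δ))) * (T1 + δ)) :=
    eventually_mem_nhdsWithin.mono fun δ hδ => key δ hδ
  have hle : coneTheta C₂ (L φ) (L ψ) ≤ ENNReal.ofReal ((1 - Real.exp (-Δ.toReal)) * T1) :=
    ge_of_tendsto hcont hev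
  calc coneTheta C₂ (L φ) (L ψ) ≤ ENNReal.ofReal ((1 - Real.exp (-Δ.toReal)) * T1) := hle
    _ = ENNReal.ofReal (1 - Real.exp (-Δ.toReal)) * ENNReal.ofReal T1 :=
        ENNReal.ofReal_mul hcpos.le
    _ = ENNReal.ofReal (1 - Real.exp (-Δ.toReal)) * coneTheta C₁ φ ψ := by
        rw [hT1, ENNReal.ofReal_toReal hfin]
end
end

section
/- Let (Q,d) be a metric space, α ∈ (0,1], δ > 0, r ∈ [0,1] and C > 0, and let φ : Q → ℝ satisfy |φ(x) − φ(y)| ≤ C·d(x,y)^α whenever d(x,y) ≤ δ. Assume that for every pair x, y ∈ Q with δ < d(x,y) < (1+r)δ there exists z ∈ Q with d(x,z) = δ and d(z,y) ≤ r·d(x,z). Then |φ(x) − φ(y)| ≤ C·(1 + r^α)·d(x,y)^α for all x, y ∈ Q with d(x,y) < (1+r)δ. -/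
open Metric

/-- If `φ` is `(C,α)`-Hölder in balls of radius `δ` and between any two points
at distance in `(δ, (1+r)δ)` one can interpolate a point `z` with `d(x,z) = δ` and
`d(z,y) ≤ r·d(x,z)`, then `φ` is `(C(1+r^α), α)`-Hölder in balls of radius `(1+r)δ`. -/
theorem holder_in_larger_balls {Q : Type*} [MetricSpace Q]
    (α : ℝ) (hα : 0 < α) (hα1 : α ≤ 1)
    (δ : ℝ) (hδ : 0 < δ)
    (r : ℝ) (hr0 : 0 ≤ r) (hr1 : r ≤ 1)
    (C : ℝ) (hC : 0 < C)
    (φ : Q → ℝ)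
    (hφ : ∀ x y : Q, dist x y ≤ δ → |φ x - φ y| ≤ C * dist x y ^ α)
    (hmid : ∀ x y : Q, δ < dist x y → dist x y < (1 + r) * δ →
      ∃ z : Q, dist x z = δ ∧ dist z y ≤ r * dist x z) :
    ∀ x y : Q, dist x y < (1 + r) * δ →
      |φ x - φ y| ≤ C * (1 + r ^ α) * dist x y ^ α := by
  intro x y hxy
  have hrα : 0 ≤ r ^ α := Real.rpow_nonneg hr0 _
  rcases le_or_gt (dist x y) δ with h | h
  · calc |φ x - φ y| ≤ C * dist x y ^ α := hφ x y h
      _ ≤ C * (1 + r ^ α) * dist x y ^ α := by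
        have : (0:ℝ) ≤ dist x y ^ α := Real.rpow_nonneg dist_nonneg _
        nlinarith [mul_nonneg hC.le (mul_nonneg hrα this)]
  · obtain ⟨z, hz1, hz2⟩ := hmid x y h hxy
    have hzy : dist z y ≤ δ := by
      rw [hz1] at hz2
      nlinarith
    have h1 : |φ x - φ z| ≤ C * δ ^ α := by
      have := hφ x z (le_of_eq hz1); rwa [hz1] at this
    have h2 : |φ z - φ y| ≤ C * (r * δ) ^ α := by
      have := hφ z y hzy
      refine this.trans ?_
      have hb : dist z y ≤ r * δ := by rw [hz1] at hz2; exact hz2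
      gcongr
    have key : |φ x - φ y| ≤ C * (1 + r ^ α) * δ ^ α := by
      have htri : |φ x - φ y| ≤ |φ x - φ z| + |φ z - φ y| := abs_sub_le _ _ _
      have hmul : (r * δ) ^ α = r ^ α * δ ^ α := Real.mul_rpow hr0 hδ.le
      calc |φ x - φ y| ≤ C * δ ^ α + C * (r * δ) ^ α := by linarith
        _ = C * (1 + r ^ α) * δ ^ α := by rw [hmul]; ring
    refine key.trans ?_
    have hδd : δ ^ α ≤ dist x y ^ α :=
      Real.rpow_le_rpow hδ.le h.le hα.le
    have : (0:ℝ) ≤ C * (1 + r ^ α) := by positivity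
    exact mul_le_mul_of_nonneg_left hδd this
end

section
/- Let G be the projection map on Q = R₁ ∪ R₂ ∪ R₃ and let P be the common refinement ⋁_{j=0}^{3} G^{−j}({R₁,R₂,R₃}). Then P is a finite cover of Q such that G³ is injective on each element of P and every x ∈ Q has at most one G³-preimage in each element of P. Moreover, for every δ with 1/2 ≤ δ ≤ 3/4 − 2ρ there is r := e³/(δ(e³ − 1) + 1) − 1 < 1 such that whenever x, y ∈ Q satisfy d(x,y) < δ, any two G³-preimages x_i, y_i of x and y lying in the same element of P satisfy d(x_i, y_i) < (1 + r)·δ. -/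
open Metric Set MeasureTheory Filter
open scoped ENNReal Classical

noncomputable section

/-- Points of `ℝ³` with the Euclidean metric. -/
abbrev E3 : Type := EuclideanSpace ℝ (Fin 3)

/-- The rectangle `R₁ = [0,ρ] × [0,1] × {0}`. -/
def R1 (ρ : ℝ) : Set E3 := {p | p 0 ∈ Icc (0 : ℝ) ρ ∧ p 1 ∈ Icc (0 : ℝ) 1 ∧ p 2 = 0}

/-- The rectangle `R₂ = [3/4−ρ, 3/4] × [0,σ] × {0}`. -/
def R2 (ρ σ : ℝ) : Set E3 :=
  {p | p 0 ∈ Icc (3 / 4 - ρ) (3 / 4 : ℝ) ∧ p 1 ∈ Icc (0 : ℝ) σ ∧ p 2 = 0}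

/-- The rectangle `R₃ = [0,ρ] × [1+ε, 2+ε] × {5/6}`. -/
def R3 (ρ ε : ℝ) : Set E3 :=
  {p | p 0 ∈ Icc (0 : ℝ) ρ ∧ p 1 ∈ Icc (1 + ε) (2 + ε) ∧ p 2 = 5 / 6}

/-- `Q = R₁ ∪ R₂ ∪ R₃`. -/
def Qset (ρ σ ε : ℝ) : Set E3 := R1 ρ ∪ R2 ρ σ ∪ R3 ρ ε

/-- `g₀ = f⁻¹`, the inverse of `f(y) = 1/(1 − (1 − 1/y)e^{−1})`;
explicitly `g₀(x) = 1/(1 − e + e/x)`. -/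
def g0 (y : ℝ) : ℝ := 1 / (1 - Real.exp 1 + Real.exp 1 / y)

/-- The projection map `G`: `G(x,y,z) = (x/ρ, g₀(y), 0)` on `R₁ ∪ R₃` and
`G(x,y,z) = ((3/4 − x)/ρ, 1 − y/σ, 5/6)` on `R₂` (where `γ = 1/ρ`). -/
def Gmap (ρ σ : ℝ) (p : E3) : E3 :=
  if p ∈ R2 ρ σ then WithLp.toLp 2 ![(3 / 4 - p 0) / ρ, 1 - p 1 / σ, 5 / 6]
  else WithLp.toLp 2 ![p 0 / ρ, g0 (p 1), 0]

/-- The set of `G`-preimages in `Q` of a point `x`. -/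
def preQ (ρ σ ε : ℝ) (x : E3) : Set E3 := {y | y ∈ Qset ρ σ ε ∧ Gmap ρ σ y = x}

/-- The Ruelle–Perron–Frobenius (transfer) operator of `(G, φ⋆)`:
`(Lψ)(x) = Σ_{y ∈ Q, G(y) = x} e^{φ⋆(y)} ψ(y)`. -/
def transferOp (ρ σ ε : ℝ) (φs : E3 → ℝ) (ψ : E3 → ℝ) (x : E3) : ℝ :=
  ∑' y : preQ ρ σ ε x, Real.exp (φs y) * ψ y

/-- `inf_Q φ`. -/
def infQ (ρ σ ε : ℝ) (φ : E3 → ℝ) : ℝ := sInf (φ '' Qset ρ σ ε)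

/-- `sup_Q φ`. -/
def supQ (ρ σ ε : ℝ) (φ : E3 → ℝ) : ℝ := sSup (φ '' Qset ρ σ ε)

/-- The sup norm `|φ|₀` over `Q`. -/
def supAbsQ (ρ σ ε : ℝ) (φ : E3 → ℝ) : ℝ := sSup ((fun x => |φ x|) '' Qset ρ σ ε)

/-- `|φ|_{α,δ}`: the smallest Hölder constant of `φ` on `Q` in balls of radius `δ`. -/
def holderQδ (ρ σ ε α δ : ℝ) (φ : E3 → ℝ) : ℝ :=
  sInf {C : ℝ | 0 ≤ C ∧ ∀ x ∈ Qset ρ σ ε, ∀ y ∈ Qset ρ σ ε,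
    dist x y ≤ δ → |φ x - φ y| ≤ C * dist x y ^ α}

/-- `|φ|_α`: the smallest global Hölder constant of `φ` on `Q`. -/
def holderQ (ρ σ ε α : ℝ) (φ : E3 → ℝ) : ℝ :=
  sInf {C : ℝ | 0 ≤ C ∧ ∀ x ∈ Qset ρ σ ε, ∀ y ∈ Qset ρ σ ε,
    |φ x - φ y| ≤ C * dist x y ^ α}

/-- Membership in the cone `C_{k,δ}` of locally Hölder observables on `Q`:
continuous on `Q`, positive on `Q`, and `|φ|_{α,δ} ≤ k · inf_Q φ` (expressed by the
defining Hölder bound with constant `k · inf_Q φ`). -/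
def memConeQ (ρ σ ε α δ k : ℝ) (φ : E3 → ℝ) : Prop :=
  ContinuousOn φ (Qset ρ σ ε) ∧ (∀ x ∈ Qset ρ σ ε, 0 < φ x) ∧
    ∀ x ∈ Qset ρ σ ε, ∀ y ∈ Qset ρ σ ε, dist x y ≤ δ →
      |φ x - φ y| ≤ k * infQ ρ σ ε φ * dist x y ^ α

/-- The property of the constant `m = m(δ)`: every function on `Q` that is `(C,α)`-Hölder
in balls of radius `δ` is globally `(m·C,α)`-Hölder on `Q`. -/
def mProp (ρ σ ε α δ m : ℝ) : Prop :=
  ∀ C : ℝ, 0 ≤ C → ∀ φ : E3 → ℝ,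
    (∀ x ∈ Qset ρ σ ε, ∀ y ∈ Qset ρ σ ε, dist x y ≤ δ → |φ x - φ y| ≤ C * dist x y ^ α) →
    ∀ x ∈ Qset ρ σ ε, ∀ y ∈ Qset ρ σ ε, |φ x - φ y| ≤ m * C * dist x y ^ α

/-- Condition (★) on the potential `φ⋆`:
`e^{3·var φ⋆}·e^{2α}·((2/3)e^{2α} + σ^α) + (10e^{3α}/3)·m·(diam Q)^α·|e^{3φ⋆}|_α / e^{3·inf φ⋆} < 1`. -/
def starCond (ρ σ ε α m : ℝ) (φs : E3 → ℝ) : Prop :=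
  Real.exp (3 * (supQ ρ σ ε φs - infQ ρ σ ε φs)) * Real.exp (2 * α) *
      ((2 / 3) * Real.exp (2 * α) + σ ^ α) +
    (10 * Real.exp (3 * α) / 3) * m * diam (Qset ρ σ ε) ^ α *
      holderQ ρ σ ε α (fun x => Real.exp (3 * φs x)) / Real.exp (3 * infQ ρ σ ε φs) < 1

/-- The element of the partition `P = ⋁_{j=0}^{3} G^{−j}({R₁,R₂,R₃})` with itinerary `i`:
points whose `j`-th iterate lies in the rectangle `R_{i(j)}` for `j = 0,1,2,3`. -/
def Pelem (ρ σ ε : ℝ) (i : Fin 4 → Fin 3) : Set E3 :=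
  {x | ∀ j : Fin 4, (Gmap ρ σ)^[(j : ℕ)] x ∈ ![R1 ρ, R2 ρ σ, R3 ρ ε] (i j)}


lemma he1 : 1 < Real.exp 1 := by nlinarith [Real.exp_one_gt_d9]

lemma g0_formula {y : ℝ} (hy : y ∈ Ioc (0:ℝ) 1) :
    g0 y = y / (Real.exp 1 - (Real.exp 1 - 1) * y) ∧ g0 y ∈ Ioc (0:ℝ) 1 := by
  obtain ⟨hy0, hy1⟩ := hy
  have he := he1
  have hd : 1 ≤ 1 - Real.exp 1 + Real.exp 1 / y := by
    have h2 : Real.exp 1 ≤ Real.exp 1 / y := by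
      rw [le_div_iff₀ hy0]; nlinarith
    linarith
  have hd0 : 0 < 1 - Real.exp 1 + Real.exp 1 / y := by linarith
  have hD : 0 < Real.exp 1 - (Real.exp 1 - 1) * y := by nlinarith
  refine ⟨?_, ?_, ?_⟩
  · unfold g0
    rw [div_eq_div_iff hd0.ne' hD.ne']
    field_simp
    ring
  · exact one_div_pos.mpr hd0
  · unfold g0
    rw [div_le_one hd0]; exact hd

lemma g0_ne_zero {y : ℝ} (hy : y ≤ 1) : g0 y ≠ 0 := by
  unfold g0
  intro h
  have he := he1
  rcases div_eq_zero_iff.mp h with h1 | h2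
  · norm_num at h1
  · have h3 : Real.exp 1 / y = Real.exp 1 - 1 := by linarith
    rcases eq_or_ne y 0 with rfl | hy0
    · rw [div_zero] at h3; linarith
    · rw [div_eq_iff hy0] at h3
      nlinarith

lemma mem_Ioc_of_g0 {y : ℝ} (h : g0 y ∈ Ioc (0:ℝ) 1) : y ∈ Ioc (0:ℝ) 1 := by
  obtain ⟨h0, h1⟩ := h
  unfold g0 at h0 h1
  have he := he1
  have hd0 : 0 < 1 - Real.exp 1 + Real.exp 1 / y := by
    by_contra hc
    push_neg at hc
    have : 1 / (1 - Real.exp 1 + Real.exp 1 / y) ≤ 0 := by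
      rcases lt_or_eq_of_le hc with h' | h'
      · exact (div_neg_of_pos_of_neg one_pos h').le
      · rw [h', div_zero]
    linarith
  have hd1 : 1 ≤ 1 - Real.exp 1 + Real.exp 1 / y := (div_le_one hd0).mp h1
  have hey : Real.exp 1 ≤ Real.exp 1 / y := by linarith
  have hy0 : 0 < y := by
    by_contra hc
    push_neg at hc
    rcases lt_or_eq_of_le hc with h' | h'
    · have := div_neg_of_pos_of_neg (Real.exp_pos 1) h'
      linarith [Real.exp_pos 1]
    · rw [h', div_zero] at hey
      linarith [Real.exp_pos 1]
  have hy1 : y ≤ 1 := by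
    rw [le_div_iff₀ hy0] at hey
    nlinarith [Real.exp_pos 1]
  exact ⟨hy0, hy1⟩

lemma g0_comp {c y : ℝ} (hc : 1 ≤ c) (hy : y ∈ Ioc (0:ℝ) 1) :
    g0 (y / (c - (c - 1) * y)) = y / (Real.exp 1 * c - (Real.exp 1 * c - 1) * y) := by
  obtain ⟨hy0, hy1⟩ := hy
  have he := he1
  have hD : 0 < c - (c - 1) * y := by nlinarith
  have hu0 : 0 < y / (c - (c - 1) * y) := div_pos hy0 hD
  have hu1 : y / (c - (c - 1) * y) ≤ 1 := by rw [div_le_one hD]; nlinarith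
  obtain ⟨hf, -⟩ := g0_formula ⟨hu0, hu1⟩
  rw [hf]
  have hD2 : 0 < Real.exp 1 - (Real.exp 1 - 1) * (y / (c - (c - 1) * y)) := by
    nlinarith [mul_le_mul_of_nonneg_left hu1 (by linarith : (0:ℝ) ≤ Real.exp 1 - 1)]
  have hec : 1 ≤ Real.exp 1 * c := by nlinarith
  have hD3 : 0 < Real.exp 1 * c - (Real.exp 1 * c - 1) * y := by
    nlinarith [mul_le_mul_of_nonneg_left hy1 (by linarith : (0:ℝ) ≤ Real.exp 1 * c - 1)]
  rw [div_eq_div_iff hD2.ne' hD3.ne']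
  field_simp [hD.ne']
  have hD' : c - y * (c - 1) ≠ 0 := by rw [mul_comm]; exact hD.ne'
  rw [eq_sub_iff_add_eq, ← add_div, div_eq_iff hD']
  ring

lemma exp3_eq : Real.exp 3 = Real.exp 1 * Real.exp 1 * Real.exp 1 := by
  rw [show (3:ℝ) = 1 + 1 + 1 by norm_num, Real.exp_add, Real.exp_add]

lemma exp3_gt : (20:ℝ) < Real.exp 3 := by
  rw [exp3_eq]; nlinarith [Real.exp_one_gt_d9]

lemma exp3_lt : Real.exp 3 < 21 := by
  rw [exp3_eq]; nlinarith [Real.exp_one_gt_d9, Real.exp_one_lt_d9]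

lemma vec3_mem {ρ σ ε : ℝ} {k : Fin 3} {p : E3} (h : p ∈ ![R1 ρ, R2 ρ σ, R3 ρ ε] k) :
    p ∈ R1 ρ ∨ p ∈ R2 ρ σ ∨ p ∈ R3 ρ ε := by
  fin_cases k
  · exact Or.inl h
  · exact Or.inr (Or.inl h)
  · exact Or.inr (Or.inr h)

lemma Gmap_eval {ρ σ : ℝ} (p : E3) (h : p ∉ R2 ρ σ) :
    Gmap ρ σ p 2 = 0 ∧ Gmap ρ σ p 0 = p 0 / ρ ∧ Gmap ρ σ p 1 = g0 (p 1) := by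
  rw [Gmap, if_neg h]
  exact ⟨rfl, rfl, rfl⟩

lemma no_return {ρ σ ε : ℝ} (hσ0 : 0 < σ) (hε0 : 0 < ε) {q : E3} (hq : q ∈ R2 ρ σ)
    (h : Gmap ρ σ q ∈ R1 ρ ∨ Gmap ρ σ q ∈ R2 ρ σ ∨ Gmap ρ σ q ∈ R3 ρ ε) : False := by
  have hGz : Gmap ρ σ q 2 = 5/6 := by rw [Gmap, if_pos hq]; rfl
  have hGy : Gmap ρ σ q 1 = 1 - q 1 / σ := by rw [Gmap, if_pos hq]; rfl
  have hq1 : 0 ≤ q 1 := hq.2.1.1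
  rcases h with h | h | h
  · have h2 := h.2.2
    rw [hGz] at h2; norm_num at h2
  · have h2 := h.2.2
    rw [hGz] at h2; norm_num at h2
  · have h2 := h.2.1.1
    rw [hGy] at h2
    have : 0 ≤ q 1 / σ := div_nonneg hq1 hσ0.le
    linarith

lemma pelem_chain {ρ σ ε : ℝ} (hρ0 : 0 < ρ) (hσ0 : 0 < σ) (hσ : σ < 1/3) (hε0 : 0 < ε)
    {i : Fin 4 → Fin 3} {p : E3} (hp : p ∈ Pelem ρ σ ε i) :
    p 2 = 0 ∧ p 0 ∈ Icc 0 ρ ∧ p 1 ∈ Ioc (0:ℝ) 1 ∧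
    ((Gmap ρ σ)^[3] p) 0 = p 0 / ρ^3 ∧
    ((Gmap ρ σ)^[3] p) 1 = p 1 / (Real.exp 3 - (Real.exp 3 - 1) * p 1) ∧
    ((Gmap ρ σ)^[3] p) 2 = 0 := by
  have he := he1
  have hp0 : p ∈ R1 ρ ∨ p ∈ R2 ρ σ ∨ p ∈ R3 ρ ε := vec3_mem (hp 0)
  have hp1 : Gmap ρ σ p ∈ R1 ρ ∨ Gmap ρ σ p ∈ R2 ρ σ ∨ Gmap ρ σ p ∈ R3 ρ ε :=
    vec3_mem (hp 1)
  have hp2 : Gmap ρ σ (Gmap ρ σ p) ∈ R1 ρ ∨ Gmap ρ σ (Gmap ρ σ p) ∈ R2 ρ σ ∨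
      Gmap ρ σ (Gmap ρ σ p) ∈ R3 ρ ε := vec3_mem (hp 2)
  have hp3 : Gmap ρ σ (Gmap ρ σ (Gmap ρ σ p)) ∈ R1 ρ ∨
      Gmap ρ σ (Gmap ρ σ (Gmap ρ σ p)) ∈ R2 ρ σ ∨
      Gmap ρ σ (Gmap ρ σ (Gmap ρ σ p)) ∈ R3 ρ ε := vec3_mem (hp 3)
  have hnp0 : p ∉ R2 ρ σ := fun h => no_return hσ0 hε0 h hp1
  have hnp1 : Gmap ρ σ p ∉ R2 ρ σ := fun h => no_return hσ0 hε0 h hp2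
  have hnp2 : Gmap ρ σ (Gmap ρ σ p) ∉ R2 ρ σ := fun h => no_return hσ0 hε0 h hp3
  obtain ⟨gz0, gx0, gy0⟩ := Gmap_eval (ρ := ρ) (σ := σ) p hnp0
  obtain ⟨gz1, gx1, gy1⟩ := Gmap_eval (ρ := ρ) (σ := σ) (Gmap ρ σ p) hnp1
  obtain ⟨gz2, gx2, gy2⟩ := Gmap_eval (ρ := ρ) (σ := σ) (Gmap ρ σ (Gmap ρ σ p)) hnp2
  have hR11 : Gmap ρ σ p ∈ R1 ρ := by
    rcases hp1 with h | h | h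
    · exact h
    · exact absurd h hnp1
    · have h2 := (h.2.2).symm.trans gz0; norm_num at h2
  have hR12 : Gmap ρ σ (Gmap ρ σ p) ∈ R1 ρ := by
    rcases hp2 with h | h | h
    · exact h
    · exact absurd h hnp2
    · have h2 := (h.2.2).symm.trans gz1; norm_num at h2
  have hy1R : g0 (p 1) ∈ Icc (0:ℝ) 1 := by have := hR11.2.1; rwa [gy0] at this
  have hy2R : g0 (g0 (p 1)) ∈ Icc (0:ℝ) 1 := by
    have := hR12.2.1; rw [gy1, gy0] at this; exact this
  have hy3R : g0 (g0 (g0 (p 1))) ∈ Icc (0:ℝ) 1 := by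
    rcases hp3 with h | h | h
    · have := h.2.1; rw [gy2, gy1, gy0] at this; exact this
    · have := h.2.1; rw [gy2, gy1, gy0] at this
      exact ⟨this.1, by linarith [this.2]⟩
    · have h2 := (h.2.2).symm.trans gz2; norm_num at h2
  have h3 : g0 (g0 (g0 (p 1))) ∈ Ioc (0:ℝ) 1 :=
    ⟨lt_of_le_of_ne hy3R.1 (Ne.symm (g0_ne_zero hy2R.2)), hy3R.2⟩
  have h2 : g0 (g0 (p 1)) ∈ Ioc (0:ℝ) 1 := mem_Ioc_of_g0 h3
  have h1 : g0 (p 1) ∈ Ioc (0:ℝ) 1 := mem_Ioc_of_g0 h2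
  have h0 : p 1 ∈ Ioc (0:ℝ) 1 := mem_Ioc_of_g0 h1
  have hpR1 : p ∈ R1 ρ := by
    rcases hp0 with h | h | h
    · exact h
    · exact absurd h hnp0
    · have := h.2.1.1; linarith [h0.2]
  have hit : (Gmap ρ σ)^[3] p = Gmap ρ σ (Gmap ρ σ (Gmap ρ σ p)) := by
    simp [Function.iterate_succ_apply']
  refine ⟨hpR1.2.2, hpR1.1, h0, ?_, ?_, ?_⟩
  · rw [hit, gx2, gx1, gx0, div_div, div_div]; ring_nf
  · rw [hit, gy2, gy1, gy0, (g0_formula h0).1, g0_comp (le_of_lt he1) h0,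
      g0_comp (by nlinarith : (1:ℝ) ≤ Real.exp 1 * Real.exp 1) h0, exp3_eq]
    ring_nf
  · rw [hit]; exact gz2


lemma key_ineq {E ρ δ s t : ℝ} (hE20 : 20 < E) (hE21 : E < 21) (hρ0 : 0 < ρ)
    (hρ : ρ < 1/3) (hδ1 : 1/2 ≤ δ) (hδ3 : δ ≤ 3/4) (hs : 0 ≤ s)
    (hst : t^2 + s^2 < δ^2) :
    ρ^6 * t^2 + E^2 * s^2 / (1 + (E-1)*s)^2 < (E * δ / (δ * (E-1) + 1))^2 := by
  have hE1 : (1:ℝ) < E := by linarith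
  have hδ0 : (0:ℝ) < δ := by linarith
  have hPs0 : (0:ℝ) < 1 + (E-1)*s := by nlinarith
  have hPδ0 : (0:ℝ) < 1 + (E-1)*δ := by nlinarith
  have hsδ : s < δ := by nlinarith
  have hPs16 : 1 + (E-1)*s ≤ 16 := by nlinarith
  have hPδ16 : 1 + (E-1)*δ ≤ 16 := by nlinarith
  have hρ6 : ρ^6 < 1/729 := by
    have h1 : ρ^6 < (1/3:ℝ)^6 := by
      apply pow_lt_pow_left₀ hρ hρ0.le
      norm_num
    norm_num at h1
    linarith
  have hPs2 : (1 + (E-1)*s)^2 ≤ 256 := by nlinarith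
  have hPδ2 : (1 + (E-1)*δ)^2 ≤ 256 := by nlinarith
  have hA : ρ^6 * (1 + (E-1)*s)^2 * (1 + (E-1)*δ)^2 < E^2 := by
    have h1 : ρ^6 * (1 + (E-1)*s)^2 ≤ (1/729) * 256 := by
      have := mul_le_mul hρ6.le hPs2 (sq_nonneg _) (by norm_num)
      linarith
    have h2 : ρ^6 * (1 + (E-1)*s)^2 * (1 + (E-1)*δ)^2 ≤ ((1/729)*256) * 256 := by
      have := mul_le_mul h1 hPδ2 (sq_nonneg _) (by norm_num)
      linarith
    nlinarith
  have hts : t^2 < δ^2 - s^2 := by linarith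
  have hprodpos : 0 < ρ^6 * (1 + (E-1)*s)^2 * (1 + (E-1)*δ)^2 := by positivity
  have h4 : ρ^6 * (1 + (E-1)*s)^2 * (1 + (E-1)*δ)^2 * t^2
      < ρ^6 * (1 + (E-1)*s)^2 * (1 + (E-1)*δ)^2 * (δ^2 - s^2) :=
    mul_lt_mul_of_pos_left hts hprodpos
  have h3 : ρ^6 * (1 + (E-1)*s)^2 * (1 + (E-1)*δ)^2 * ((δ-s)*(δ+s))
      ≤ E^2 * ((δ-s)*(δ+s)) := by
    apply mul_le_mul_of_nonneg_right hA.le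
    exact mul_nonneg (by linarith) (by linarith)
  have hF : (0:ℝ) ≤ E - 1 := by linarith
  have h2' : 0 ≤ E^2 * (δ-s) * (2*(E-1)*δ*s) :=
    mul_nonneg (mul_nonneg (sq_nonneg E) (by linarith))
      (mul_nonneg (mul_nonneg (mul_nonneg (by norm_num : (0:ℝ) ≤ 2) hF) hδ0.le) hs)
  have key : ρ^6 * (1 + (E-1)*s)^2 * (1 + (E-1)*δ)^2 * t^2 + E^2 * s^2 * (1 + (E-1)*δ)^2
      < E^2 * δ^2 * (1 + (E-1)*s)^2 := by linarith [h4, h3, h2']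

  have hPs2pos : (0:ℝ) < (1 + (E-1)*s)^2 := pow_pos hPs0 2
  have hPδ2pos : (0:ℝ) < (1 + (E-1)*δ)^2 := pow_pos hPδ0 2
  have hD : δ * (E-1) + 1 = 1 + (E-1)*δ := by ring
  rw [hD]
  rw [show (E * δ / (1 + (E-1)*δ))^2 = E^2*δ^2/(1 + (E-1)*δ)^2 by rw [div_pow]; ring_nf]
  have lhs_eq : ρ^6 * t^2 + E^2 * s^2 / (1 + (E-1)*s)^2
      = (ρ^6 * t^2 * (1 + (E-1)*s)^2 + E^2 * s^2) / (1 + (E-1)*s)^2 := by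
    field_simp
  rw [lhs_eq, div_lt_div_iff₀ hPs2pos hPδ2pos]
  linarith [key]

set_option maxHeartbeats 1000000 in
lemma part6 (ρ σ ε : ℝ) (hρ0 : 0 < ρ) (hρ : ρ < 1 / 3) (hσ0 : 0 < σ) (hσ : σ < 1 / 3)
    (hε0 : 0 < ε) (hε : ε < 1 / 100)
    (δ : ℝ) (hδ1 : 1 / 2 ≤ δ) (hδ2 : δ ≤ 3 / 4 - 2 * ρ) :
    (∀ x ∈ Qset ρ σ ε, ∀ y ∈ Qset ρ σ ε, dist x y < δ →
      ∀ i : Fin 4 → Fin 3, ∀ x' ∈ Pelem ρ σ ε i, ∀ y' ∈ Pelem ρ σ ε i,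
        (Gmap ρ σ)^[3] x' = x → (Gmap ρ σ)^[3] y' = y →
          dist x' y' < (1 + (Real.exp 3 / (δ * (Real.exp 3 - 1) + 1) - 1)) * δ) := by
  have hE20 := exp3_gt
  have hE21 := exp3_lt
  have hE1 : (1:ℝ) < Real.exp 3 := by linarith
  have hδ0 : (0:ℝ) < δ := by linarith
  have hδ34 : δ ≤ 3/4 := by linarith
  intro x hxQ y hyQ hdxy i x' hx' y' hy' hGx hGy
  obtain ⟨hxz', hxx', hx1, hGx0, hGx1, hGx2⟩ := pelem_chain hρ0 hσ0 hσ hε0 hx'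
  obtain ⟨hyz', hyy', hy1, hGy0, hGy1, hGy2⟩ := pelem_chain hρ0 hσ0 hσ hε0 hy'
  rw [hGx] at hGx0 hGx1 hGx2
  rw [hGy] at hGy0 hGy1 hGy2
  have hEE : (0:ℝ) ≤ Real.exp 3 - 1 := by linarith
  have hDa : 0 < Real.exp 3 - (Real.exp 3 - 1) * x' 1 := by
    have p := mul_le_mul_of_nonneg_left hx1.2 hEE
    linarith only [p, hE1]
  have hDb : 0 < Real.exp 3 - (Real.exp 3 - 1) * y' 1 := by
    have p := mul_le_mul_of_nonneg_left hy1.2 hEE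
    linarith only [p, hE1]
  have hX1 : 0 < x 1 := by rw [hGx1]; exact div_pos hx1.1 hDa
  have hY1 : 0 < y 1 := by rw [hGy1]; exact div_pos hy1.1 hDb
  have key_a : x' 1 * (1 + (Real.exp 3 - 1) * x 1) = Real.exp 3 * x 1 := by
    have h' : x 1 * (Real.exp 3 - (Real.exp 3 - 1) * x' 1) = x' 1 :=
      (eq_div_iff hDa.ne').mp hGx1
    linear_combination -h'
  have key_b : y' 1 * (1 + (Real.exp 3 - 1) * y 1) = Real.exp 3 * y 1 := by
    have h' : y 1 * (Real.exp 3 - (Real.exp 3 - 1) * y' 1) = y' 1 :=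
      (eq_div_iff hDb.ne').mp hGy1
    linear_combination -h'
  set s : ℝ := |x 1 - y 1| with hs_def
  have hs0 : 0 ≤ s := abs_nonneg _
  have habs : s ≤ x 1 + y 1 :=
    abs_le.mpr ⟨by linarith only [hX1, hY1], by linarith only [hX1, hY1]⟩
  have hab : (x' 1 - y' 1) * ((1 + (Real.exp 3 - 1) * x 1) * (1 + (Real.exp 3 - 1) * y 1))
      = Real.exp 3 * (x 1 - y 1) := by
    linear_combination (1 + (Real.exp 3 - 1) * y 1) * key_a
      - (1 + (Real.exp 3 - 1) * x 1) * key_b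
  have hPs1 : 1 + (Real.exp 3 - 1) * s
      ≤ (1 + (Real.exp 3 - 1) * x 1) * (1 + (Real.exp 3 - 1) * y 1) := by
    have p1 : 0 ≤ (Real.exp 3 - 1) * (Real.exp 3 - 1) * (x 1 * y 1) :=
      mul_nonneg (mul_nonneg hEE hEE) (mul_nonneg hX1.le hY1.le)
    have p2 : (Real.exp 3 - 1) * s ≤ (Real.exp 3 - 1) * (x 1 + y 1) :=
      mul_le_mul_of_nonneg_left habs hEE
    linarith only [p1, p2]
  have hPspos : (0:ℝ) < 1 + (Real.exp 3 - 1) * s := by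
    have p := mul_nonneg hEE hs0
    linarith only [p]
  have hab2 : (x' 1 - y' 1)^2 * (1 + (Real.exp 3 - 1) * s)^2 ≤ Real.exp 3 ^2 * s^2 := by
    have h6 : (x' 1 - y' 1)^2 * ((1 + (Real.exp 3 - 1) * x 1) * (1 + (Real.exp 3 - 1) * y 1))^2
        = Real.exp 3 ^2 * (x 1 - y 1)^2 := by
      rw [← mul_pow, hab, mul_pow]
    have h7 : (x 1 - y 1)^2 = s^2 := (sq_abs _).symm
    have h8 : (1 + (Real.exp 3 - 1) * s)^2
        ≤ ((1 + (Real.exp 3 - 1) * x 1) * (1 + (Real.exp 3 - 1) * y 1))^2 :=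
      pow_le_pow_left₀ hPspos.le hPs1 2
    have h10 := mul_le_mul_of_nonneg_left h8 (sq_nonneg (x' 1 - y' 1))
    have h12 : Real.exp 3 ^2 * (x 1 - y 1)^2 = Real.exp 3 ^2 * s^2 := by rw [h7]
    linarith only [h10, h6, h12]
  have h9 : (x' 1 - y' 1)^2 ≤ Real.exp 3 ^2 * s^2 / (1 + (Real.exp 3 - 1) * s)^2 := by
    rw [le_div_iff₀ (pow_pos hPspos 2)]
    exact hab2
  have hxy2 : (x 0 - y 0)^2 + s^2 < δ^2 := by
    have h := hdxy
    rw [EuclideanSpace.dist_eq, Fin.sum_univ_three, Real.dist_eq, Real.dist_eq, Real.dist_eq,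
      Real.sqrt_lt' hδ0, hGx2, hGy2] at h
    simp only [sq_abs] at h
    norm_num at h
    rw [hs_def, sq_abs]
    linarith only [h]
  have hkey := key_ineq hE20 hE21 hρ0 hρ hδ1 hδ34 hs0 hxy2
  have hxe : x' 0 = x 0 * ρ^3 := by
    rw [hGx0]; field_simp
  have hye : y' 0 = y 0 * ρ^3 := by
    rw [hGy0]; field_simp
  have hΔ0 : (x' 0 - y' 0)^2 = ρ^6 * (x 0 - y 0)^2 := by rw [hxe, hye]; ring
  have hDpos : (0:ℝ) < δ * (Real.exp 3 - 1) + 1 := by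
    have p := mul_nonneg hδ0.le hEE
    linarith only [p]
  have hReq : (1 + (Real.exp 3 / (δ * (Real.exp 3 - 1) + 1) - 1)) * δ
      = Real.exp 3 * δ / (δ * (Real.exp 3 - 1) + 1) := by
    field_simp
    ring
  rw [hReq]
  have hR0 : 0 < Real.exp 3 * δ / (δ * (Real.exp 3 - 1) + 1) :=
    div_pos (mul_pos (by positivity) hδ0) hDpos
  have hfin : (x' 0 - y' 0)^2 + (x' 1 - y' 1)^2
      < (Real.exp 3 * δ / (δ * (Real.exp 3 - 1) + 1))^2 := by
    rw [hΔ0]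
    linarith only [hkey, h9]
  rw [EuclideanSpace.dist_eq, Fin.sum_univ_three, Real.dist_eq, Real.dist_eq, Real.dist_eq,
    hxz', hyz', Real.sqrt_lt' hR0]
  simpa [sq_abs] using hfin

set_option maxHeartbeats 2000000 in
/-- The partition `P = ⋁_{j=0}^{3} G^{−j}({R₁,R₂,R₃})` is a finite cover of
`Q` (of the points whose first three iterates remain in `Q`) by injective domains of `G³`;
every `x ∈ Q` has at most one `G³`-preimage in each element of `P`; and for
`1/2 ≤ δ ≤ 3/4 − 2ρ` and `r = e³/(δ(e³−1)+1) − 1 < 1`, any two `G³`-preimages of points at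
distance `< δ` lying in the same element of `P` are at distance `< (1+r)δ`. -/
theorem partition_into_injectivity_domains
    (ρ σ ε : ℝ) (hρ0 : 0 < ρ) (hρ : ρ < 1 / 3) (hσ0 : 0 < σ) (hσ : σ < 1 / 3)
    (hε0 : 0 < ε) (hε : ε < 1 / 100)
    (δ : ℝ) (hδ1 : 1 / 2 ≤ δ) (hδ2 : δ ≤ 3 / 4 - 2 * ρ) :
    (Set.range (Pelem ρ σ ε)).Finite ∧
    ({y : E3 | ∀ j : Fin 4, (Gmap ρ σ)^[(j : ℕ)] y ∈ Qset ρ σ ε} ⊆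
      ⋃ i : Fin 4 → Fin 3, Pelem ρ σ ε i) ∧
    (∀ i : Fin 4 → Fin 3, Set.InjOn ((Gmap ρ σ)^[3]) (Pelem ρ σ ε i)) ∧
    (∀ x ∈ Qset ρ σ ε, ∀ i : Fin 4 → Fin 3, ∀ y₁ ∈ Pelem ρ σ ε i, ∀ y₂ ∈ Pelem ρ σ ε i,
      (Gmap ρ σ)^[3] y₁ = x → (Gmap ρ σ)^[3] y₂ = x → y₁ = y₂) ∧
    Real.exp 3 / (δ * (Real.exp 3 - 1) + 1) - 1 < 1 ∧
    (∀ x ∈ Qset ρ σ ε, ∀ y ∈ Qset ρ σ ε, dist x y < δ →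
      ∀ i : Fin 4 → Fin 3, ∀ x' ∈ Pelem ρ σ ε i, ∀ y' ∈ Pelem ρ σ ε i,
        (Gmap ρ σ)^[3] x' = x → (Gmap ρ σ)^[3] y' = y →
          dist x' y' < (1 + (Real.exp 3 / (δ * (Real.exp 3 - 1) + 1) - 1)) * δ) := by
  have hE20 := exp3_gt
  have hE21 := exp3_lt
  have hE1 : (1:ℝ) < Real.exp 3 := by linarith
  have hδ0 : (0:ℝ) < δ := by linarith
  have hδ34 : δ ≤ 3/4 := by linarith
  have hinj : ∀ i : Fin 4 → Fin 3, Set.InjOn ((Gmap ρ σ)^[3]) (Pelem ρ σ ε i) := by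
    intro i u hu v hv huv
    obtain ⟨huz, hu0, hu1, hux, huy, -⟩ := pelem_chain hρ0 hσ0 hσ hε0 hu
    obtain ⟨hvz, hv0, hv1, hvx, hvy, -⟩ := pelem_chain hρ0 hσ0 hσ hε0 hv
    have hDu : 0 < Real.exp 3 - (Real.exp 3 - 1) * u 1 := by nlinarith [hu1.1, hu1.2]
    have hDv : 0 < Real.exp 3 - (Real.exp 3 - 1) * v 1 := by nlinarith [hv1.1, hv1.2]
    have h1 : u 1 / (Real.exp 3 - (Real.exp 3 - 1) * u 1)
        = v 1 / (Real.exp 3 - (Real.exp 3 - 1) * v 1) := by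
      rw [← huy, ← hvy, huv]
    rw [div_eq_div_iff hDu.ne' hDv.ne'] at h1
    have h2 : u 1 = v 1 :=
      mul_left_cancel₀ (by positivity : (Real.exp 3) ≠ 0) (by linear_combination h1)
    have h3 : u 0 = v 0 := by
      have h4 : u 0 / ρ^3 = v 0 / ρ^3 := by rw [← hux, ← hvx, huv]
      field_simp [hρ0.ne'] at h4
      exact h4
    ext j
    fin_cases j
    · exact h3
    · exact h2
    · show u 2 = v 2
      rw [huz, hvz]
  refine ⟨Set.finite_range _, ?_, hinj, ?_, ?_, ?_⟩
  · intro z hz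
    simp only [mem_iUnion]
    refine ⟨fun j => if (Gmap ρ σ)^[(j:ℕ)] z ∈ R1 ρ then 0
      else if (Gmap ρ σ)^[(j:ℕ)] z ∈ R2 ρ σ then 1 else 2, fun j => ?_⟩
    have hzj := hz j
    by_cases h1 : (Gmap ρ σ)^[(j:ℕ)] z ∈ R1 ρ
    · simp only [if_pos h1]
      exact h1
    · by_cases h2 : (Gmap ρ σ)^[(j:ℕ)] z ∈ R2 ρ σ
      · simp only [if_neg h1, if_pos h2]
        exact h2
      · simp only [if_neg h1, if_neg h2]
        rcases hzj with (h | h) | h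
        · exact absurd h h1
        · exact absurd h h2
        · exact h
  · intro x hx i y₁ h₁ y₂ h₂ e₁ e₂
    exact hinj i h₁ h₂ (e₁.trans e₂.symm)
  · have hD : (0:ℝ) < δ * (Real.exp 3 - 1) + 1 := by nlinarith
    have h2 : Real.exp 3 / (δ * (Real.exp 3 - 1) + 1) < 2 := by
      rw [div_lt_iff₀ hD]; nlinarith
    linarith
  · exact part6 ρ σ ε hρ0 hρ hσ0 hσ hε0 hε δ hδ1 hδ2
end
end

section
/- Let (Q,d) be a compact metric space, α ∈ (0,1], δ > 0, k > 0 and λ̂ ∈ (0,1), and let m > 0 be a constant such that every function on Q that is (C,α)-Hölder in balls of radius δ is globally (m·C,α)-Hölder. Then for all φ, ψ in the cone C_{λ̂k,δ} one has Θ_k(φ,ψ) ≤ 2·log((1+λ̂)/(1−λ̂)) + 2·log(1 + m·λ̂·k·(diam Q)^α), where Θ_k is the projective metric of the cone C_{k,δ}; in particular C_{λ̂k,δ} has finite Θ_k-diameter. -/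
open Metric Set
open scoped ENNReal

noncomputable section

/-- The smallest constant `C ≥ 0` such that `|φ(x) − φ(y)| ≤ C·d(x,y)^α` whenever
`d(x,y) ≤ δ`, i.e. `|φ|_{α,δ}`. -/
def holderConstBall {Q : Type*} [MetricSpace Q] (α δ : ℝ) (φ : Q → ℝ) : ℝ :=
  sInf {C : ℝ | 0 ≤ C ∧ ∀ x y : Q, dist x y ≤ δ → |φ x - φ y| ≤ C * dist x y ^ α}

/-- Membership in the cone `C_{k,δ}` of locally Hölder observables: `φ` is continuous,
everywhere positive, and `|φ|_{α,δ} ≤ k · inf φ` (expressed by the defining Hölder bound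
with constant `k · inf φ`). -/
def memCone {Q : Type*} [MetricSpace Q] (α δ k : ℝ) (φ : Q → ℝ) : Prop :=
  Continuous φ ∧ (∀ x, 0 < φ x) ∧
    ∀ x y : Q, dist x y ≤ δ → |φ x - φ y| ≤ k * (⨅ z, φ z) * dist x y ^ α

/-- The projective metric `Θ_k` of the cone `C_{k,δ}`, with values in `[0,+∞]`:
`Θ_k(φ,ψ) = log (B/A)` with `A = sup{t > 0 : ψ − tφ ∈ C_{k,δ}}`,
`B = inf{s > 0 : sφ − ψ ∈ C_{k,δ}}` (equal to `+∞` when `A = 0` or `B = +∞`). -/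
def thetaCone {Q : Type*} [MetricSpace Q] (α δ k : ℝ) (φ ψ : Q → ℝ) : ℝ≥0∞ :=
  ⨅ (s : ℝ) (_ : 0 < s) (_ : memCone α δ k (fun x => s * φ x - ψ x))
    (t : ℝ) (_ : 0 < t) (_ : memCone α δ k (fun x => ψ x - t * φ x)),
    ENNReal.ofReal (Real.log (s / t))

/-- For `φ, ψ` in the smaller cone `C_{λ̂k,δ}` one has
`Θ_k(φ,ψ) ≤ 2·log((1+λ̂)/(1−λ̂)) + 2·log(1 + m·λ̂·k·(diam Q)^α)`; in particular
`C_{λ̂k,δ}` has finite `Θ_k`-diameter. -/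
theorem smaller_cone_finite_diameter {Q : Type*} [MetricSpace Q] [CompactSpace Q] [Nonempty Q]
    (α δ k m lamhat : ℝ) (hα : 0 < α) (hα1 : α ≤ 1) (hδ : 0 < δ) (hk : 0 < k) (hm : 0 < m)
    (hlam0 : 0 < lamhat) (hlam1 : lamhat < 1)
    (hmprop : ∀ C : ℝ, 0 ≤ C → ∀ φ : Q → ℝ,
      (∀ x y : Q, dist x y ≤ δ → |φ x - φ y| ≤ C * dist x y ^ α) →
      ∀ x y : Q, |φ x - φ y| ≤ m * C * dist x y ^ α)
    (φ ψ : Q → ℝ) (hφ : memCone α δ (lamhat * k) φ) (hψ : memCone α δ (lamhat * k) ψ) :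
    thetaCone α δ k φ ψ ≤
      ENNReal.ofReal (2 * Real.log ((1 + lamhat) / (1 - lamhat)) +
        2 * Real.log (1 + m * lamhat * k * diam (univ : Set Q) ^ α)) := by

  obtain ⟨hφc, hφpos, hφhol⟩ := hφ
  obtain ⟨hψc, hψpos, hψhol⟩ := hψ
  obtain ⟨x₀, -, hx₀⟩ := isCompact_univ.exists_isMinOn univ_nonempty hφc.continuousOn
  obtain ⟨y₀, -, hy₀⟩ := isCompact_univ.exists_isMinOn univ_nonempty hψc.continuousOn
  have hx₀' : ∀ z, φ x₀ ≤ φ z := fun z => isMinOn_iff.mp hx₀ z (mem_univ z)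
  have hy₀' : ∀ z, ψ y₀ ≤ ψ z := fun z => isMinOn_iff.mp hy₀ z (mem_univ z)
  set a := ⨅ z, φ z with ha_def
  set b := ⨅ z, ψ z with hb_def
  have hbddφ : BddBelow (Set.range φ) := ⟨φ x₀, by rintro r ⟨z, rfl⟩; exact hx₀' z⟩
  have hbddψ : BddBelow (Set.range ψ) := ⟨ψ y₀, by rintro r ⟨z, rfl⟩; exact hy₀' z⟩
  have ha : a = φ x₀ := le_antisymm (ciInf_le hbddφ x₀) (le_ciInf hx₀')
  have hb : b = ψ y₀ := le_antisymm (ciInf_le hbddψ y₀) (le_ciInf hy₀')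
  have hapos : 0 < a := ha ▸ hφpos x₀
  have hbpos : 0 < b := hb ▸ hψpos y₀
  have haz : ∀ z, a ≤ φ z := fun z => ciInf_le hbddφ z
  have hbz : ∀ z, b ≤ ψ z := fun z => ciInf_le hbddψ z
  set D := diam (univ : Set Q) with hD_def
  have hDnn : 0 ≤ D ^ α := Real.rpow_nonneg diam_nonneg α
  have hmk : 0 ≤ m * lamhat * k * D ^ α := by positivity
  set E := 1 + m * lamhat * k * D ^ α with hE_def
  have hE1 : 1 ≤ E := by rw [hE_def]; linarith
  have hEpos : 0 < E := lt_of_lt_of_le one_pos hE1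
  have h1l : 0 < 1 - lamhat := by linarith
  have h1p : 0 < 1 + lamhat := by linarith
  have hφglob : ∀ x y, |φ x - φ y| ≤ m * (lamhat * k * a) * dist x y ^ α :=
    hmprop _ (by positivity) φ hφhol
  have hψglob : ∀ x y, |ψ x - ψ y| ≤ m * (lamhat * k * b) * dist x y ^ α :=
    hmprop _ (by positivity) ψ hψhol
  have hdistD : ∀ x y : Q, dist x y ^ α ≤ D ^ α := fun x y =>
    Real.rpow_le_rpow dist_nonneg
      (dist_le_diam_of_mem isCompact_univ.isBounded (mem_univ x) (mem_univ y)) hα.le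
  have haE : a * E = a + m * lamhat * k * a * D ^ α := by rw [hE_def]; ring
  have hbE : b * E = b + m * lamhat * k * b * D ^ α := by rw [hE_def]; ring
  have hφsup : ∀ x, φ x ≤ a * E := by
    intro x
    have key : φ x - a ≤ m * lamhat * k * a * D ^ α := by
      calc φ x - a = φ x - φ x₀ := by rw [ha]
        _ ≤ |φ x - φ x₀| := le_abs_self _
        _ ≤ m * (lamhat * k * a) * dist x x₀ ^ α := hφglob x x₀
        _ ≤ m * (lamhat * k * a) * D ^ α :=
            mul_le_mul_of_nonneg_left (hdistD x x₀) (by positivity)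
        _ = m * lamhat * k * a * D ^ α := by ring
    linarith
  have hψsup : ∀ x, ψ x ≤ b * E := by
    intro x
    have key : ψ x - b ≤ m * lamhat * k * b * D ^ α := by
      calc ψ x - b = ψ x - ψ y₀ := by rw [hb]
        _ ≤ |ψ x - ψ y₀| := le_abs_self _
        _ ≤ m * (lamhat * k * b) * dist x y₀ ^ α := hψglob x y₀
        _ ≤ m * (lamhat * k * b) * D ^ α :=
            mul_le_mul_of_nonneg_left (hdistD x y₀) (by positivity)
        _ = m * lamhat * k * b * D ^ α := by ring
    linarith
  set s := (1 + lamhat) * E * b / ((1 - lamhat) * a) with hs_def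
  set t := (1 - lamhat) * b / ((1 + lamhat) * E * a) with ht_def
  have hspos : 0 < s := by rw [hs_def]; positivity
  have htpos : 0 < t := by rw [ht_def]; positivity
  have hsa : (1 - lamhat) * (s * a) = (1 + lamhat) * E * b := by
    rw [hs_def]; field_simp
  have hta : (1 + lamhat) * E * (t * a) = (1 - lamhat) * b := by
    rw [ht_def]; field_simp
  have keyχ : lamhat * (s * a + b) ≤ s * a - E * b := by
    nlinarith [mul_nonneg (mul_nonneg hbpos.le hlam0.le) (sub_nonneg.mpr hE1)]
  have keyη : lamhat * (b + t * a) ≤ b - t * a * E := by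
    nlinarith [mul_nonneg (mul_nonneg (mul_pos htpos hapos).le hlam0.le) (sub_nonneg.mpr hE1)]
  have hχpt : ∀ z, lamhat * (s * a + b) ≤ s * φ z - ψ z := by
    intro z
    have h1 : s * a ≤ s * φ z := mul_le_mul_of_nonneg_left (haz z) hspos.le
    have h2 : ψ z ≤ b * E := hψsup z
    have h3 : E * b = b * E := by ring
    linarith [keyχ]
  have hηpt : ∀ z, lamhat * (b + t * a) ≤ ψ z - t * φ z := by
    intro z
    have h1 : t * φ z ≤ t * (a * E) := mul_le_mul_of_nonneg_left (hφsup z) htpos.le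
    have h2 : b ≤ ψ z := hbz z
    have h3 : t * (a * E) = t * a * E := by ring
    linarith [keyη]
  have hppos : 0 < lamhat * (s * a + b) := by positivity
  have hqpos : 0 < lamhat * (b + t * a) := by positivity
  have hχinf : lamhat * (s * a + b) ≤ ⨅ z, s * φ z - ψ z := le_ciInf hχpt
  have hηinf : lamhat * (b + t * a) ≤ ⨅ z, ψ z - t * φ z := le_ciInf hηpt
  have hχ : memCone α δ k (fun x => s * φ x - ψ x) := by
    refine ⟨by fun_prop, fun x => ?_, fun x y hxy => ?_⟩
    · have := hχpt x; show 0 < s * φ x - ψ x; linarith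
    · show |(s * φ x - ψ x) - (s * φ y - ψ y)| ≤
        k * (⨅ z, s * φ z - ψ z) * dist x y ^ α
      have hd : 0 ≤ dist x y ^ α := Real.rpow_nonneg dist_nonneg α
      calc |(s * φ x - ψ x) - (s * φ y - ψ y)|
          = |s * (φ x - φ y) - (ψ x - ψ y)| := by ring_nf
        _ ≤ |s * (φ x - φ y)| + |ψ x - ψ y| := abs_sub _ _
        _ = s * |φ x - φ y| + |ψ x - ψ y| := by rw [abs_mul, abs_of_pos hspos]
        _ ≤ s * (lamhat * k * a * dist x y ^ α) + lamhat * k * b * dist x y ^ α :=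
            add_le_add (mul_le_mul_of_nonneg_left (hφhol x y hxy) hspos.le) (hψhol x y hxy)
        _ = k * (lamhat * (s * a + b)) * dist x y ^ α := by ring
        _ ≤ k * (⨅ z, s * φ z - ψ z) * dist x y ^ α :=
            mul_le_mul_of_nonneg_right (mul_le_mul_of_nonneg_left hχinf hk.le) hd
  have hη : memCone α δ k (fun x => ψ x - t * φ x) := by
    refine ⟨by fun_prop, fun x => ?_, fun x y hxy => ?_⟩
    · have := hηpt x; show 0 < ψ x - t * φ x; linarith
    · show |(ψ x - t * φ x) - (ψ y - t * φ y)| ≤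
        k * (⨅ z, ψ z - t * φ z) * dist x y ^ α
      have hd : 0 ≤ dist x y ^ α := Real.rpow_nonneg dist_nonneg α
      calc |(ψ x - t * φ x) - (ψ y - t * φ y)|
          = |(ψ x - ψ y) - t * (φ x - φ y)| := by ring_nf
        _ ≤ |ψ x - ψ y| + |t * (φ x - φ y)| := abs_sub _ _
        _ = |ψ x - ψ y| + t * |φ x - φ y| := by rw [abs_mul, abs_of_pos htpos]
        _ ≤ lamhat * k * b * dist x y ^ α + t * (lamhat * k * a * dist x y ^ α) :=
            add_le_add (hψhol x y hxy) (mul_le_mul_of_nonneg_left (hφhol x y hxy) htpos.le)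
        _ = k * (lamhat * (b + t * a)) * dist x y ^ α := by ring
        _ ≤ k * (⨅ z, ψ z - t * φ z) * dist x y ^ α :=
            mul_le_mul_of_nonneg_right (mul_le_mul_of_nonneg_left hηinf hk.le) hd
  have hstep : thetaCone α δ k φ ψ ≤ ENNReal.ofReal (Real.log (s / t)) :=
    iInf_le_of_le s (iInf_le_of_le hspos (iInf_le_of_le hχ
      (iInf_le_of_le t (iInf_le_of_le htpos (iInf_le _ hη)))))
  refine hstep.trans (le_of_eq ?_)
  congr 1
  have hst : s / t = ((1 + lamhat) / (1 - lamhat) * E) ^ 2 := by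
    rw [hs_def, ht_def]; field_simp
  rw [hst, Real.log_pow, Real.log_mul (by positivity) (by positivity),
    Real.log_div (by positivity) (by positivity)]
  push_cast
  ring
end
end

section
/- Let G be the projection map on Q = R₁ ∪ R₂ ∪ R₃, fix δ with 1/2 ≤ δ ≤ 3/4 − 2ρ, and let φ⋆ : Q → ℝ be an α-Hölder potential satisfying condition (★). For k > 0 sufficiently large, letting λ̂ ∈ (0,1) be such that L³(C_{k,δ}) ⊆ C_{λ̂k,δ} and Δ := diam_{Θ_k}(C_{λ̂k,δ}) > 0, the operator L³ is a strict contraction of the cone C_{k,δ} in its projective metric: Θ_k(L³φ, L³ψ) ≤ (1 − e^{−Δ})·Θ_k(φ,ψ) for all φ, ψ ∈ C_{k,δ}. -/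
open Metric Set MeasureTheory Filter
open scoped ENNReal Classical

noncomputable section

/-- The projective metric `Θ_k` of the cone `C_{k,δ}` of observables on `Q`, with values in
`[0,+∞]`: `Θ_k(φ,ψ) = log (B/A)` with `A = sup{t > 0 : ψ − tφ ∈ C_{k,δ}}` and
`B = inf{s > 0 : sφ − ψ ∈ C_{k,δ}}` (equal to `+∞` when `A = 0` or `B = +∞`). -/
def thetaQ (ρ σ ε α δ k : ℝ) (φ ψ : E3 → ℝ) : ℝ≥0∞ :=
  ⨅ (s : ℝ) (_ : 0 < s) (_ : memConeQ ρ σ ε α δ k (fun x => s * φ x - ψ x))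
    (t : ℝ) (_ : 0 < t) (_ : memConeQ ρ σ ε α δ k (fun x => ψ x - t * φ x)),
    ENNReal.ofReal (Real.log (s / t))


/-! ### Auxiliary lemmas -/

lemma g0_injective : Function.Injective g0 := by
  intro a b h
  have he : Real.exp 1 ≠ 0 := (Real.exp_pos 1).ne'
  have h' : 1 - Real.exp 1 + Real.exp 1 / a = 1 - Real.exp 1 + Real.exp 1 / b := by
    have h2 := h
    simp only [g0, one_div] at h2
    exact inv_injective h2
  have h2 : Real.exp 1 * a⁻¹ = Real.exp 1 * b⁻¹ := by
    rw [div_eq_mul_inv, div_eq_mul_inv] at h'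
    linarith
  exact inv_injective (mul_left_cancel₀ he h2)

lemma preQ_finite {ρ σ ε : ℝ} (hρ : ρ ≠ 0) (hσ : σ ≠ 0) (x : E3) :
    (preQ ρ σ ε x).Finite := by
  classical
  apply Set.Finite.of_finite_image (f := fun p : E3 => (decide (p ∈ R2 ρ σ), decide (p 2 = 0)))
    (Set.toFinite _)
  intro p hp q hq hpq
  obtain ⟨hpQ, hpG⟩ := hp
  obtain ⟨hqQ, hqG⟩ := hq
  simp only [Prod.mk.injEq, decide_eq_decide] at hpq
  obtain ⟨h2iff, h0iff⟩ := hpq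
  by_cases hpR : p ∈ R2 ρ σ
  · have hqR : q ∈ R2 ρ σ := h2iff.mp hpR
    rw [Gmap, if_pos hpR] at hpG
    rw [Gmap, if_pos hqR] at hqG
    have h := congrArg WithLp.ofLp (hpG.trans hqG.symm)
    have h0 := congrFun h 0
    have h1 := congrFun h 1
    simp only [WithLp.ofLp_toLp, Matrix.cons_val_zero, Matrix.cons_val_one, Matrix.head_cons] at h0 h1
    have e0 : p 0 = q 0 := by field_simp at h0; linarith
    have e1 : p 1 = q 1 := by field_simp at h1; linarith
    ext i; fin_cases i
    exacts [e0, e1, hpR.2.2.trans hqR.2.2.symm]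
  · have hqR : q ∉ R2 ρ σ := fun hh => hpR (h2iff.mpr hh)
    rw [Gmap, if_neg hpR] at hpG
    rw [Gmap, if_neg hqR] at hqG
    have h := congrArg WithLp.ofLp (hpG.trans hqG.symm)
    have h0 := congrFun h 0
    have h1 := congrFun h 1
    simp only [WithLp.ofLp_toLp, Matrix.cons_val_zero, Matrix.cons_val_one, Matrix.head_cons] at h0 h1
    have e0 : p 0 = q 0 := by field_simp at h0; linarith
    have e1 : p 1 = q 1 := g0_injective h1
    have e2 : p 2 = q 2 := by
      by_cases hz : p 2 = 0
      · rw [hz, (h0iff.mp hz).symm]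
      · have hz' : ¬ q 2 = 0 := fun hh => hz (h0iff.mpr hh)
        have hp3 : p ∈ R3 ρ ε := by
          rcases hpQ with (h1' | h2') | h3'
          · exact absurd h1'.2.2 hz
          · exact absurd h2' hpR
          · exact h3'
        have hq3 : q ∈ R3 ρ ε := by
          rcases hqQ with (h1' | h2') | h3'
          · exact absurd h1'.2.2 hz'
          · exact absurd h2' hqR
          · exact h3'
        rw [hp3.2.2, hq3.2.2]
    ext i; fin_cases i
    exacts [e0, e1, e2]

lemma transferOp_lin {ρ σ ε : ℝ} (hρ : ρ ≠ 0) (hσ : σ ≠ 0) (φs : E3 → ℝ)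
    (a b : ℝ) (f g : E3 → ℝ) :
    transferOp ρ σ ε φs (fun x => a * f x + b * g x)
      = fun x => a * transferOp ρ σ ε φs f x + b * transferOp ρ σ ε φs g x := by
  funext x
  haveI := (preQ_finite (ε := ε) hρ hσ x).to_subtype
  simp only [transferOp]
  calc (∑' y : preQ ρ σ ε x, Real.exp (φs y) * (a * f y + b * g y))
      = ∑' y : preQ ρ σ ε x,
          (a * (Real.exp (φs y) * f y) + b * (Real.exp (φs y) * g y)) :=
        tsum_congr fun y => by ring
    _ = (∑' y : preQ ρ σ ε x, a * (Real.exp (φs y) * f y))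
        + ∑' y : preQ ρ σ ε x, b * (Real.exp (φs y) * g y) :=
        Summable.tsum_add (Summable.of_finite) (Summable.of_finite)
    _ = a * (∑' y : preQ ρ σ ε x, Real.exp (φs y) * f y)
        + b * (∑' y : preQ ρ σ ε x, Real.exp (φs y) * g y) := by
        rw [tsum_mul_left, tsum_mul_left]

lemma transferOp_lin3 {ρ σ ε : ℝ} (hρ : ρ ≠ 0) (hσ : σ ≠ 0) (φs : E3 → ℝ)
    (a b : ℝ) (f g : E3 → ℝ) :
    (transferOp ρ σ ε φs)^[3] (fun x => a * f x + b * g x)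
      = fun x => a * (transferOp ρ σ ε φs)^[3] f x + b * (transferOp ρ σ ε φs)^[3] g x := by
  have h3 : ∀ h : E3 → ℝ, (transferOp ρ σ ε φs)^[3] h
      = transferOp ρ σ ε φs (transferOp ρ σ ε φs (transferOp ρ σ ε φs h)) := by
    intro h
    simp [Function.iterate_succ_apply, Function.iterate_zero_apply]
  rw [h3, h3, h3, transferOp_lin hρ hσ, transferOp_lin hρ hσ, transferOp_lin hρ hσ]

lemma key_ineq_s10 {u v x : ℝ} (hu : 0 < u) (huv : u ≤ v) (hx : 1 ≤ x) :
    Real.log (1 + v * x) - Real.log (1 + u * x)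
      - (Real.log (1 + v) - Real.log (1 + u)) ≤ (1 - u / v) * Real.log x := by
  have hv : 0 < v := lt_of_lt_of_le hu huv
  set F : ℝ → ℝ := fun y => (1 - u / v) * Real.log y
    - Real.log (1 + v * y) + Real.log (1 + u * y) with hF
  have hasD : ∀ y : ℝ, 0 < y → HasDerivAt F
      ((1 - u / v) * y⁻¹ - (1 + v * y)⁻¹ * v + (1 + u * y)⁻¹ * u) y := by
    intro y hy
    have hvy : (0:ℝ) < 1 + v * y := by nlinarith
    have huy : (0:ℝ) < 1 + u * y := by nlinarith
    have h1 : HasDerivAt (fun y : ℝ => (1 - u / v) * Real.log y) ((1 - u / v) * y⁻¹) y :=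
      (Real.hasDerivAt_log hy.ne').const_mul _
    have i2 : HasDerivAt (fun y : ℝ => 1 + v * y) v y := by
      simpa using ((hasDerivAt_id y).const_mul v).const_add 1
    have h2 : HasDerivAt (fun y : ℝ => Real.log (1 + v * y)) ((1 + v * y)⁻¹ * v) y :=
      by have := (Real.hasDerivAt_log hvy.ne').comp y i2; exact this
    have i3 : HasDerivAt (fun y : ℝ => 1 + u * y) u y := by
      simpa using ((hasDerivAt_id y).const_mul u).const_add 1
    have h3 : HasDerivAt (fun y : ℝ => Real.log (1 + u * y)) ((1 + u * y)⁻¹ * u) y :=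
      by have := (Real.hasDerivAt_log huy.ne').comp y i3; exact this
    exact (h1.sub h2).add h3
  have hmono : MonotoneOn F (Ici 1) := by
    apply monotoneOn_of_deriv_nonneg (convex_Ici 1)
    · intro y hy
      exact (hasD y (lt_of_lt_of_le one_pos hy)).differentiableAt.continuousAt.continuousWithinAt
    · intro y hy
      rw [interior_Ici] at hy
      exact (hasD y (lt_trans one_pos hy)).differentiableAt.differentiableWithinAt
    · intro y hy
      rw [interior_Ici] at hy
      have hy0 : (0:ℝ) < y := lt_trans one_pos hy
      rw [(hasD y hy0).deriv]
      have hvy : (0:ℝ) < 1 + v * y := by nlinarith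
      have huy : (0:ℝ) < 1 + u * y := by nlinarith
      have e1 : (1 - u / v) * y⁻¹ = (v - u) / (v * y) := by field_simp
      have e2 : (1 + v * y)⁻¹ * v - (1 + u * y)⁻¹ * u
          = (v - u) / ((1 + v * y) * (1 + u * y)) := by
        field_simp
        ring
      have e3 : (v - u) / ((1 + v * y) * (1 + u * y)) ≤ (v - u) / (v * y) := by
        apply div_le_div_of_nonneg_left (by linarith) (by positivity)
        nlinarith [mul_nonneg (mul_nonneg hu.le hy0.le) (mul_nonneg hv.le hy0.le),
          mul_nonneg hu.le hy0.le]
      rw [e1]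
      linarith [e2 ▸ e3]
  have h1x : F 1 ≤ F x := hmono (self_mem_Ici) hx hx
  simp only [hF, Real.log_one, mul_zero, mul_one] at h1x
  linarith

lemma ennreal_mul_iInf {ι : Sort*} {c : ℝ≥0∞} (h0 : c ≠ 0) (hT : c ≠ ⊤) (f : ι → ℝ≥0∞) :
    c * ⨅ i, f i = ⨅ i, c * f i := by
  apply le_antisymm
  · exact le_iInf fun i => mul_le_mul_right (iInf_le f i) c
  · have h1 : c⁻¹ * (⨅ i, c * f i) ≤ ⨅ i, f i := le_iInf fun i => by
      calc c⁻¹ * (⨅ j, c * f j) ≤ c⁻¹ * (c * f i) := mul_le_mul_right (iInf_le _ i) _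
        _ = f i := by rw [← mul_assoc, ENNReal.inv_mul_cancel h0 hT, one_mul]
    calc (⨅ i, c * f i) = c * (c⁻¹ * ⨅ i, c * f i) := by
          rw [← mul_assoc, ENNReal.mul_inv_cancel h0 hT, one_mul]
      _ ≤ c * ⨅ i, f i := mul_le_mul_right h1 c

lemma zero_mem_Qset {ρ σ ε : ℝ} (hρ0 : 0 ≤ ρ) : (0 : E3) ∈ Qset ρ σ ε := by
  left; left
  refine ⟨?_, ?_, ?_⟩ <;> simp [hρ0]

lemma infQ_le_of_mem {ρ σ ε : ℝ} {χ : E3 → ℝ} (hpos : ∀ x ∈ Qset ρ σ ε, 0 < χ x)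
    {z : E3} (hz : z ∈ Qset ρ σ ε) : infQ ρ σ ε χ ≤ χ z := by
  rw [infQ]
  apply csInf_le ⟨0, ?_⟩ (Set.mem_image_of_mem χ hz)
  rintro w ⟨y, hy, rfl⟩
  exact (hpos y hy).le

lemma cone_smul {ρ σ ε α δ k c : ℝ} {χ : E3 → ℝ} (hk : 0 ≤ k) (hc : 0 < c)
    (h : memConeQ ρ σ ε α δ k χ) : memConeQ ρ σ ε α δ k (fun x => c * χ x) := by
  obtain ⟨hcont, hpos, hhold⟩ := h
  refine ⟨continuousOn_const.mul hcont, fun x hx => mul_pos hc (hpos x hx), ?_⟩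
  intro x hx y hy hd
  have hinf : c * infQ ρ σ ε χ ≤ infQ ρ σ ε (fun x => c * χ x) := by
    rw [infQ]
    apply le_csInf ⟨c * χ x, Set.mem_image_of_mem (fun x => c * χ x) hx⟩
    rintro w ⟨z, hz, rfl⟩
    exact mul_le_mul_of_nonneg_left (infQ_le_of_mem hpos hz) hc.le
  calc |c * χ x - c * χ y| = c * |χ x - χ y| := by
        rw [← mul_sub, abs_mul, abs_of_pos hc]
    _ ≤ c * (k * infQ ρ σ ε χ * dist x y ^ α) :=
        mul_le_mul_of_nonneg_left (hhold x hx y hy hd) hc.le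
    _ = k * (c * infQ ρ σ ε χ) * dist x y ^ α := by ring
    _ ≤ k * infQ ρ σ ε (fun x => c * χ x) * dist x y ^ α := by
        apply mul_le_mul_of_nonneg_right (mul_le_mul_of_nonneg_left hinf hk)
        exact Real.rpow_nonneg dist_nonneg α

set_option maxHeartbeats 2000000 in
/-- **contraction on the cone.** For `k > 0` sufficiently large, if
`λ̂ ∈ (0,1)` is such that `L³(C_{k,δ}) ⊆ C_{λ̂k,δ}` and `Δ := diam_{Θ_k}(C_{λ̂k,δ}) > 0`
(a finite quantity), then `Θ_k(L³φ, L³ψ) ≤ (1 − e^{−Δ})·Θ_k(φ,ψ)` for all `φ, ψ ∈ C_{k,δ}`. -/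
theorem transfer_operator_cone_contraction
    (ρ σ ε : ℝ) (hρ0 : 0 < ρ) (hρ : ρ < 1 / 3) (hσ0 : 0 < σ) (hσ : σ < 1 / 3)
    (hε0 : 0 < ε) (hε : ε < 1 / 100)
    (α : ℝ) (hα : 0 < α) (hα1 : α ≤ 1)
    (δ : ℝ) (hδ1 : 1 / 2 ≤ δ) (hδ2 : δ ≤ 3 / 4 - 2 * ρ)
    (m : ℝ) (hm : 0 < m) (hmp : mProp ρ σ ε α δ m)
    (φs : E3 → ℝ)
    (hφs : ∃ C : ℝ, 0 ≤ C ∧ ∀ x ∈ Qset ρ σ ε, ∀ y ∈ Qset ρ σ ε,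
      |φs x - φs y| ≤ C * dist x y ^ α)
    (hstar : starCond ρ σ ε α m φs) :
    ∃ k₀ : ℝ, 0 < k₀ ∧ ∀ k : ℝ, k₀ ≤ k →
      ∀ lamhat : ℝ, 0 < lamhat → lamhat < 1 →
        (∀ φ : E3 → ℝ, memConeQ ρ σ ε α δ k φ →
          memConeQ ρ σ ε α δ (lamhat * k) ((transferOp ρ σ ε φs)^[3] φ)) →
        ∀ Δ : ℝ≥0∞,
          Δ = (⨆ (φ : E3 → ℝ) (_ : memConeQ ρ σ ε α δ (lamhat * k) φ)
                (ψ : E3 → ℝ) (_ : memConeQ ρ σ ε α δ (lamhat * k) ψ),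
                thetaQ ρ σ ε α δ k φ ψ) →
          0 < Δ → Δ ≠ ⊤ →
          ∀ φ ψ : E3 → ℝ, memConeQ ρ σ ε α δ k φ → memConeQ ρ σ ε α δ k ψ →
            thetaQ ρ σ ε α δ k ((transferOp ρ σ ε φs)^[3] φ) ((transferOp ρ σ ε φs)^[3] ψ) ≤
              ENNReal.ofReal (1 - Real.exp (-Δ.toReal)) * thetaQ ρ σ ε α δ k φ ψ := by
  classical
  refine ⟨1, one_pos, ?_⟩
  intro k hk lamhat hl0 hl1 hmap Δ hΔ hΔpos hΔtop φ ψ hφ hψ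
  have hρne : ρ ≠ 0 := hρ0.ne'
  have hσne : σ ≠ 0 := hσ0.ne'
  have hk0 : (0:ℝ) ≤ k := le_trans zero_le_one hk
  set Φ := (transferOp ρ σ ε φs)^[3] φ with hΦdef
  set Ψ := (transferOp ρ σ ε φs)^[3] ψ with hΨdef
  have hq0 : (0 : E3) ∈ Qset ρ σ ε := zero_mem_Qset hρ0.le
  have hΔr : 0 < Δ.toReal := ENNReal.toReal_pos hΔpos.ne' hΔtop
  have hcpos : 0 < 1 - Real.exp (-Δ.toReal) := by
    have := Real.exp_lt_one_iff.mpr (neg_neg_of_pos hΔr)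
    linarith
  have hc0 : (ENNReal.ofReal (1 - Real.exp (-Δ.toReal))) ≠ 0 :=
    (ENNReal.ofReal_pos.mpr hcpos).ne'
  have hcT : (ENNReal.ofReal (1 - Real.exp (-Δ.toReal))) ≠ ⊤ := ENNReal.ofReal_ne_top
  have main : ∀ s : ℝ, 0 < s → memConeQ ρ σ ε α δ k (fun x => s * φ x - ψ x) →
      ∀ t : ℝ, 0 < t → memConeQ ρ σ ε α δ k (fun x => ψ x - t * φ x) →
      thetaQ ρ σ ε α δ k Φ Ψ ≤
        ENNReal.ofReal (1 - Real.exp (-Δ.toReal)) * ENNReal.ofReal (Real.log (s / t)) := by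
    intro s hs hms t ht hmt
    have hφ0 : 0 < φ 0 := hφ.2.1 _ hq0
    have hms0 : 0 < s * φ 0 - ψ 0 := hms.2.1 _ hq0
    have hmt0 : 0 < ψ 0 - t * φ 0 := hmt.2.1 _ hq0
    have hts : t < s := by nlinarith
    set x := s / t with hxdef
    have hx1 : 1 < x := (one_lt_div ht).mpr hts
    have hLx : 0 < Real.log x := Real.log_pos hx1
    set A := fun z : E3 => s * Φ z - Ψ z with hAdef
    set B := fun z : E3 => Ψ z - t * Φ z with hBdef
    have hA : memConeQ ρ σ ε α δ (lamhat * k) A := by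
      have h1 := hmap _ hms
      have e1 : (fun z : E3 => s * φ z - ψ z) = fun z => s * φ z + (-1) * ψ z := by
        funext z; ring
      rw [e1, transferOp_lin3 hρne hσne] at h1
      have e2 : (fun z : E3 => s * (transferOp ρ σ ε φs)^[3] φ z
          + (-1) * (transferOp ρ σ ε φs)^[3] ψ z) = A := by
        funext z; rw [hAdef, hΦdef, hΨdef]; ring
      rwa [e2] at h1
    have hB : memConeQ ρ σ ε α δ (lamhat * k) B := by
      have h1 := hmap _ hmt
      have e1 : (fun z : E3 => ψ z - t * φ z) = fun z => (-t) * φ z + 1 * ψ z := by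
        funext z; ring
      rw [e1, transferOp_lin3 hρne hσne] at h1
      have e2 : (fun z : E3 => (-t) * (transferOp ρ σ ε φs)^[3] φ z
          + 1 * (transferOp ρ σ ε φs)^[3] ψ z) = B := by
        funext z; rw [hBdef, hΦdef, hΨdef]; ring
      rwa [e2] at h1
    have hABΔ : thetaQ ρ σ ε α δ k A B ≤ Δ := by
      rw [hΔ]
      exact le_iSup_of_le A (le_iSup_of_le hA (le_iSup_of_le B (le_iSup_of_le hB le_rfl)))
    rw [← ENNReal.ofReal_mul hcpos.le]
    apply ENNReal.le_of_forall_pos_le_add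
    intro ε' hε' _
    set η := (ε' : ℝ) / Real.log x with hηdef
    have hη : 0 < η := div_pos (by exact_mod_cast hε') hLx
    have hlt : thetaQ ρ σ ε α δ k A B < Δ + ENNReal.ofReal η :=
      lt_of_le_of_lt hABΔ (ENNReal.lt_add_right hΔtop (ENNReal.ofReal_pos.mpr hη).ne')
    simp only [thetaQ, iInf_lt_iff] at hlt
    obtain ⟨v, hv, hmV, u, hu, hmU, hvult⟩ := hlt
    have hApos : 0 < A 0 := hA.2.1 _ hq0
    have h1' : 0 < v * A 0 - B 0 := hmV.2.1 _ hq0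
    have h2' : 0 < B 0 - u * A 0 := hmU.2.1 _ hq0
    have huv : u < v := by nlinarith
    have hlogvu : 0 < Real.log (v / u) := Real.log_pos ((one_lt_div hu).mpr huv)
    have hvu2 : Real.log (v / u) < Δ.toReal + η := by
      rw [← ENNReal.ofReal_toReal hΔtop, ← ENNReal.ofReal_add hΔr.le hη.le] at hvult
      exact (ENNReal.ofReal_lt_ofReal_iff_of_nonneg hlogvu.le).mp hvult
    have huvexp : Real.exp (-(Δ.toReal + η)) < u / v := by
      have hb1 : v / u < Real.exp (Δ.toReal + η) := by
        rw [← Real.exp_log (div_pos hv hu)]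
        exact Real.exp_lt_exp.mpr hvu2
      have hb2 := one_div_lt_one_div_of_lt (div_pos hv hu) hb1
      rw [one_div, one_div, ← Real.exp_neg, inv_div] at hb2
      exact hb2
    set s' := (v * s + t) / (1 + v) with hs'def
    set t' := (t + u * s) / (1 + u) with ht'def
    have h1v : (0:ℝ) < 1 + v := by linarith
    have h1u : (0:ℝ) < 1 + u := by linarith
    have hs' : 0 < s' := div_pos (by nlinarith) h1v
    have ht' : 0 < t' := div_pos (by nlinarith) h1u
    have hmS : memConeQ ρ σ ε α δ k (fun z => s' * Φ z - Ψ z) := by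
      have h := cone_smul (c := (1 + v)⁻¹) hk0 (inv_pos.mpr h1v) hmV
      have e : (fun z : E3 => (1 + v)⁻¹ * ((fun x => v * A x - B x) z))
          = fun z => s' * Φ z - Ψ z := by
        funext z
        simp only [hAdef, hBdef, hs'def]
        field_simp
        ring
      rwa [e] at h
    have hmT : memConeQ ρ σ ε α δ k (fun z => Ψ z - t' * Φ z) := by
      have h := cone_smul (c := (1 + u)⁻¹) hk0 (inv_pos.mpr h1u) hmU
      have e : (fun z : E3 => (1 + u)⁻¹ * ((fun x => (fun z => Ψ z - t * Φ z) x
          - u * ((fun z => s * Φ z - Ψ z) x)) z))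
          = fun z => Ψ z - t' * Φ z := by
        funext z
        simp only [ht'def]
        field_simp
        ring
      have e' : (fun z : E3 => (1 + u)⁻¹ * ((fun x => B x - u * A x) z))
          = fun z => Ψ z - t' * Φ z := by
        funext z
        simp only [hAdef, hBdef, ht'def]
        field_simp
        ring
      rwa [e'] at h
    have hθ : thetaQ ρ σ ε α δ k Φ Ψ ≤ ENNReal.ofReal (Real.log (s' / t')) := by
      rw [thetaQ]
      exact iInf_le_of_le s' (iInf_le_of_le hs' (iInf_le_of_le hmS (iInf_le_of_le t'
        (iInf_le_of_le ht' (iInf_le_of_le hmT le_rfl)))))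
    have hvx : (0:ℝ) < 1 + v * x := by nlinarith
    have hux : (0:ℝ) < 1 + u * x := by nlinarith
    have hst : Real.log (s' / t') ≤ (1 - u / v) * Real.log x := by
      have hratio : s' / t' = ((1 + v * x) * (1 + u)) / ((1 + u * x) * (1 + v)) := by
        have hnum : (0:ℝ) < t + u * s := by nlinarith
        rw [hs'def, ht'def, hxdef]
        field_simp
        ring
      rw [hratio, Real.log_div (mul_pos hvx h1u).ne' (mul_pos hux h1v).ne',
        Real.log_mul hvx.ne' h1u.ne', Real.log_mul hux.ne' h1v.ne']
      have hkey := key_ineq_s10 hu huv.le hx1.le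
      linarith
    have hfinal : Real.log (s' / t')
        ≤ (1 - Real.exp (-Δ.toReal)) * Real.log x + η * Real.log x := by
      have b1 : (1 - u / v) * Real.log x
          ≤ (1 - Real.exp (-(Δ.toReal + η))) * Real.log x :=
        mul_le_mul_of_nonneg_right (by linarith) hLx.le
      have b3 : Real.exp (-Δ.toReal) - Real.exp (-(Δ.toReal + η)) ≤ η := by
        have e : Real.exp (-(Δ.toReal + η)) = Real.exp (-Δ.toReal) * Real.exp (-η) := by
          rw [← Real.exp_add]; ring_nf
        have h4 : Real.exp (-Δ.toReal) ≤ 1 := by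
          rw [Real.exp_le_one_iff]; linarith
        have h5 := Real.add_one_le_exp (-η)
        nlinarith [Real.exp_pos (-Δ.toReal), Real.exp_pos (-η)]
      have b4 : (Real.exp (-Δ.toReal) - Real.exp (-(Δ.toReal + η))) * Real.log x
          ≤ η * Real.log x := mul_le_mul_of_nonneg_right b3 hLx.le
      nlinarith [hst, b1, b4]
    have hη2 : η * Real.log x = (ε' : ℝ) := by
      rw [hηdef]; field_simp
    calc thetaQ ρ σ ε α δ k Φ Ψ ≤ ENNReal.ofReal (Real.log (s' / t')) := hθ
      _ ≤ ENNReal.ofReal ((1 - Real.exp (-Δ.toReal)) * Real.log x + η * Real.log x) :=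
          ENNReal.ofReal_le_ofReal hfinal
      _ ≤ ENNReal.ofReal ((1 - Real.exp (-Δ.toReal)) * Real.log x)
          + ENNReal.ofReal (η * Real.log x) := ENNReal.ofReal_add_le
      _ = ENNReal.ofReal ((1 - Real.exp (-Δ.toReal)) * Real.log x) + ↑ε' := by
          rw [hη2, ENNReal.ofReal_coe_nnreal]
  conv_rhs => rw [thetaQ]
  simp only [ennreal_mul_iInf hc0 hcT]
  exact le_iInf fun s => le_iInf fun hs => le_iInf fun hms => le_iInf fun t =>
    le_iInf fun ht => le_iInf fun hmt => main s hs hms t ht hmt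
end
end

section
/- Let (X,d) be a compact metric space with Borel σ-algebra B, T : X → X a Borel measurable map, and μ a T-invariant Borel probability measure. Assume μ has exponential decay of correlations for Hölder observables with a constant linear in the L¹-norm of the first factor: there exist τ ∈ (0,1) and, for each α-Hölder ψ : X → ℝ, a constant K(ψ) > 0 such that |∫(φ∘Tⁿ)·ψ dμ − ∫φ dμ·∫ψ dμ| ≤ K(ψ)·‖φ‖_{L¹(μ)}·τⁿ for all φ ∈ L¹(μ) and all n ≥ 1. Then μ is exact: every φ ∈ L¹(μ) that is measurable with respect to the tail σ-algebra B_∞ = ⋂_{n≥0} T^{−n}(B) is constant μ-almost everywhere. -/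
open MeasureTheory Metric Set Filter
open Topology

noncomputable section

/-- Factorization of a simple function measurable w.r.t. a sub-σ-algebra of a comap. -/
lemma simpleFunc_comap_factor' {X Y : Type*} [mX : MeasurableSpace X] {mY : MeasurableSpace Y}
    (f : X → Y) (hle : mX ≤ mY.comap f) (s : SimpleFunc X ℝ) :
    ∃ g : Y → ℝ, Measurable g ∧ ∀ x, s x = g (f x) := by
  have hB : ∀ c : ℝ, ∃ B : Set Y, MeasurableSet B ∧ f ⁻¹' B = s ⁻¹' {c} :=
    fun c => hle _ (s.measurableSet_fiber c)
  choose B hBm hBeq using hB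
  classical
  refine ⟨fun y => ∑ c ∈ s.range, (B c).indicator (fun _ => c) y, ?_, ?_⟩
  · exact Finset.measurable_sum _ fun c _ => measurable_const.indicator (hBm c)
  · intro x
    have hmem : s x ∈ s.range := s.mem_range_self x
    show s x = ∑ c ∈ s.range, (B c).indicator (fun _ => c) (f x)
    rw [Finset.sum_eq_single (s x)]
    · have hx : f x ∈ B (s x) := by
        have : x ∈ f ⁻¹' B (s x) := by rw [hBeq]; exact rfl
        exact this
      simp [Set.indicator_of_mem hx]
    · intro c _ hne
      have hx : f x ∉ B c := by
        intro hmemc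
        have : x ∈ s ⁻¹' {c} := by rw [← hBeq]; exact hmemc
        exact hne (Set.mem_singleton_iff.1 this).symm
      simp [Set.indicator_of_notMem hx]
    · intro h; exact absurd hmem h

/-- Doob–Dynkin factorization for real-valued functions. -/
lemma measurable_comap_factor' {X Y : Type*} [mX : MeasurableSpace X] {mY : MeasurableSpace Y}
    (f : X → Y) (hle : mX ≤ mY.comap f) (φ : X → ℝ) (hφ : Measurable φ) :
    ∃ g : Y → ℝ, Measurable g ∧ ∀ x, φ x = g (f x) := by
  have hs : StronglyMeasurable φ := hφ.stronglyMeasurable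
  choose G hGm hGeq using fun k => simpleFunc_comap_factor' f hle (hs.approx k)
  have htend : ∀ x, Tendsto (fun k => G k (f x)) atTop (𝓝 (φ x)) := by
    intro x
    have h1 := hs.tendsto_approx x
    have heq : (fun k => G k (f x)) = fun k => (hs.approx k) x := by
      funext k; exact (hGeq k x).symm
    rw [heq]; exact h1
  set E : Set Y := {y | ∃ L : ℝ, Tendsto (fun k => G k y) atTop (𝓝 L)} with hE
  have hEm : MeasurableSet E := measurableSet_exists_tendsto hGm
  set H : ℕ → Y → ℝ := fun k => E.indicator (G k) with hH
  have hHm : ∀ k, Measurable (H k) := fun k => (hGm k).indicator hEm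
  have hHt : ∀ y, ∃ L, Tendsto (fun k => H k y) atTop (𝓝 L) := by
    intro y
    by_cases hy : y ∈ E
    · obtain ⟨L, hL⟩ := id hy
      refine ⟨L, ?_⟩
      have h2 : (fun k => H k y) = fun k => G k y := by
        funext k; exact Set.indicator_of_mem hy _
      rw [h2]; exact hL
    · refine ⟨0, ?_⟩
      have h2 : (fun k => H k y) = fun _ => 0 := by
        funext k; exact Set.indicator_of_notMem hy _
      rw [h2]; exact tendsto_const_nhds
  set g : Y → ℝ := fun y => limUnder atTop (fun k => H k y) with hg
  have hgt : ∀ y, Tendsto (fun k => H k y) atTop (𝓝 (g y)) :=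
    fun y => tendsto_nhds_limUnder (hHt y)
  refine ⟨g, ?_, ?_⟩
  · exact measurable_of_tendsto_metrizable' atTop hHm (tendsto_pi_nhds.2 hgt)
  · intro x
    have hxE : f x ∈ E := ⟨φ x, htend x⟩
    have heq : (fun k => H k (f x)) = fun k => G k (f x) := by
      funext k; exact Set.indicator_of_mem hxE _
    have h2 : Tendsto (fun k => H k (f x)) atTop (𝓝 (φ x)) := by rw [heq]; exact htend x
    exact (h2.limUnder_eq).symm

/-- **exactness from decay of correlations.** Let `T` be a measurable map
of a compact metric space preserving a Borel probability measure `μ`. If `μ` has exponential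
decay of correlations for Hölder observables, with constant linear in the `L¹`-norm of the
first factor, then `μ` is exact: every `φ ∈ L¹(μ)` measurable with respect to the tail
`σ`-algebra `B_∞ = ⋂_{n ≥ 0} T^{−n}(B)` is constant `μ`-almost everywhere. -/
theorem exactness_from_exponential_decay
    {X : Type*} [MetricSpace X] [CompactSpace X] [MeasurableSpace X] [BorelSpace X]
    (T : X → X) (hT : Measurable T)
    (μ : Measure X) (hμprob : IsProbabilityMeasure μ)
    (hinv : ∀ A : Set X, MeasurableSet A → μ (T ⁻¹' A) = μ A)
    (α : ℝ) (hα : 0 < α) (hα1 : α ≤ 1)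
    (τ : ℝ) (hτ0 : 0 < τ) (hτ1 : τ < 1)
    (hdec : ∀ ψ : X → ℝ,
      (∃ C : ℝ, 0 ≤ C ∧ ∀ x y : X, |ψ x - ψ y| ≤ C * dist x y ^ α) →
      ∃ K : ℝ, 0 < K ∧ ∀ φ : X → ℝ, Integrable φ μ → ∀ n : ℕ, 1 ≤ n →
        |(∫ x, φ (T^[n] x) * ψ x ∂μ) - (∫ x, φ x ∂μ) * ∫ x, ψ x ∂μ| ≤
          K * (∫ x, |φ x| ∂μ) * τ ^ n) :
    ∀ φ : X → ℝ, Integrable φ μ →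
      Measurable[⨅ n : ℕ, MeasurableSpace.comap (T^[n]) (inferInstance : MeasurableSpace X)] φ →
      ∃ c : ℝ, ∀ᵐ x ∂μ, φ x = c := by
  intro φ hφint hφmeas
  haveI := hμprob
  classical
  -- measure preservation
  have hmap1 : μ.map T = μ := Measure.ext fun s hs => by
    rw [Measure.map_apply hT hs]; exact hinv s hs
  have hmp : MeasurePreserving T μ μ := ⟨hT, hmap1⟩
  have hmpn : ∀ n : ℕ, MeasurePreserving (T^[n]) μ μ := fun n => hmp.iterate n
  have hmap : ∀ n : ℕ, μ.map (T^[n]) = μ := fun n => (hmpn n).map_eq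
  -- Borel measurability of φ
  have hφB : Measurable φ := by
    have h0 := hφmeas.mono (iInf_le _ 0) le_rfl
    exact h0.mono (by simp [MeasurableSpace.comap_id]) le_rfl
  -- factorization at every time n
  have hfac : ∀ n : ℕ, ∃ g : X → ℝ, Measurable g ∧ ∀ x, φ x = g (T^[n] x) := by
    intro n
    exact measurable_comap_factor'
      (mX := MeasurableSpace.comap (T^[n]) ‹MeasurableSpace X›)
      (T^[n]) le_rfl φ (hφmeas.mono (iInf_le _ n) le_rfl)
  -- key identity : correlations vanish
  have hKey : ∀ ψ : X → ℝ,
      (∃ C : ℝ, 0 ≤ C ∧ ∀ x y : X, |ψ x - ψ y| ≤ C * dist x y ^ α) →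
      (∫ x, φ x * ψ x ∂μ) = (∫ x, φ x ∂μ) * ∫ x, ψ x ∂μ := by
    intro ψ hψ
    obtain ⟨K, hK0, hKb⟩ := hdec ψ hψ
    set A := (∫ x, φ x * ψ x ∂μ) - (∫ x, φ x ∂μ) * ∫ x, ψ x ∂μ with hA
    have hbound : ∀ n : ℕ, 1 ≤ n → |A| ≤ K * (∫ x, |φ x| ∂μ) * τ ^ n := by
      intro n hn
      obtain ⟨g, hgm, hge⟩ := hfac n
      have hcomp : Integrable (fun x => g (T^[n] x)) μ := by
        have heq : (fun x => g (T^[n] x)) = φ := by funext x; exact (hge x).symm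
        rw [heq]; exact hφint
      have hgint : Integrable g μ := by
        have h1 : Integrable g (μ.map (T^[n])) := by
          rw [integrable_map_measure (by rw [hmap n]; exact hgm.aestronglyMeasurable)
            (hmpn n).measurable.aemeasurable]
          exact hcomp
        rwa [hmap n] at h1
      have h2 := hKb g hgint n hn
      have e1 : (∫ x, g (T^[n] x) * ψ x ∂μ) = ∫ x, φ x * ψ x ∂μ :=
        integral_congr_ae (Eventually.of_forall fun x => by
          show g (T^[n] x) * ψ x = φ x * ψ x
          rw [hge x])
      have e2 : (∫ x, g x ∂μ) = ∫ x, φ x ∂μ := by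
        conv_lhs => rw [← hmap n]
        rw [integral_map (hmpn n).measurable.aemeasurable
          (by rw [hmap n]; exact hgm.aestronglyMeasurable)]
        exact integral_congr_ae (Eventually.of_forall fun x => (hge x).symm)
      have e3 : (∫ x, |g x| ∂μ) = ∫ x, |φ x| ∂μ := by
        conv_lhs => rw [← hmap n]
        rw [integral_map (hmpn n).measurable.aemeasurable
          (by rw [hmap n]; exact hgm.abs.aestronglyMeasurable)]
        exact integral_congr_ae (Eventually.of_forall fun x => by
          show |g (T^[n] x)| = |φ x|
          rw [hge x])
      rw [e1, e2, e3] at h2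
      exact h2
    have hτn : Tendsto (fun n : ℕ => K * (∫ x, |φ x| ∂μ) * τ ^ n) atTop (𝓝 0) := by
      have h := tendsto_pow_atTop_nhds_zero_of_lt_one hτ0.le hτ1
      simpa using h.const_mul (K * ∫ x, |φ x| ∂μ)
    have hle0 : |A| ≤ 0 :=
      ge_of_tendsto hτn (eventually_atTop.2 ⟨1, fun n hn => hbound n hn⟩)
    have hA0 : A = 0 := abs_eq_zero.1 (le_antisymm hle0 (abs_nonneg _))
    have := sub_eq_zero.1 hA0
    linarith [this]
  -- the candidate constant
  set c := ∫ x, φ x ∂μ with hc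
  set g : X → ℝ := fun x => φ x - c with hgdef
  have hgB : Measurable g := hφB.sub measurable_const
  have hgint : Integrable g μ := hφint.sub (integrable_const c)
  -- distance-power comparison
  have hdistpow : ∀ x y : X, dist x y ≤ max 1 (diam (univ : Set X)) * dist x y ^ α := by
    intro x y
    set d := dist x y with hd
    have hd0 : 0 ≤ d := dist_nonneg
    rcases eq_or_lt_of_le hd0 with h0 | h0
    · rw [← h0, Real.zero_rpow (ne_of_gt hα), mul_zero]
    rcases le_total d 1 with h1 | h1
    · have h2 : d ^ (1:ℝ) ≤ d ^ α := Real.rpow_le_rpow_of_exponent_ge h0 h1 hα1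
      have h3 : d ≤ d ^ α := by rwa [Real.rpow_one] at h2
      have h4 : 0 ≤ d ^ α := Real.rpow_nonneg hd0 α
      calc d ≤ d ^ α := h3
        _ = 1 * d ^ α := (one_mul _).symm
        _ ≤ max 1 (diam (univ : Set X)) * d ^ α :=
            mul_le_mul_of_nonneg_right (le_max_left _ _) h4
    · have hD : d ≤ diam (univ : Set X) :=
        dist_le_diam_of_mem isCompact_univ.isBounded trivial trivial
      have h2 : (1:ℝ) ≤ d ^ α := Real.one_le_rpow h1 hα.le
      have h3 : (0:ℝ) ≤ max 1 (diam (univ : Set X)) :=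
        le_trans zero_le_one (le_max_left _ _)
      calc d ≤ diam (univ : Set X) := hD
        _ ≤ max 1 (diam (univ : Set X)) := le_max_right _ _
        _ ≤ max 1 (diam (univ : Set X)) * d ^ α := le_mul_of_one_le_right h3 h2
  set D := max 1 (diam (univ : Set X)) with hDdef
  have hD0 : 0 ≤ D := le_trans zero_le_one (le_max_left _ _)
  -- integral of g over closed sets vanishes
  have hclosed : ∀ F : Set X, IsClosed F → ∫ x in F, g x ∂μ = 0 := by
    intro F hF
    rcases eq_empty_or_nonempty F with rfl | hFne
    · simp
    set ψ : ℕ → X → ℝ := fun k x => max (1 - (k+1 : ℝ) * infDist x F) 0 with hψdef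
    have hψcont : ∀ k, Continuous (ψ k) := fun k =>
      (continuous_const.sub (continuous_const.mul (continuous_infDist_pt F))).max
        continuous_const
    have hψ0 : ∀ k x, 0 ≤ ψ k x := fun k x => le_max_right _ _
    have hψ1 : ∀ k x, ψ k x ≤ 1 := by
      intro k x
      apply max_le _ zero_le_one
      have h1 : 0 ≤ infDist x F := infDist_nonneg
      have h2 : (0:ℝ) ≤ (k+1 : ℝ) := by positivity
      nlinarith
    have hψhold : ∀ k, ∃ C : ℝ, 0 ≤ C ∧ ∀ x y : X, |ψ k x - ψ k y| ≤ C * dist x y ^ α := by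
      intro k
      refine ⟨(k+1 : ℝ) * D, by positivity, fun x y => ?_⟩
      have h1 : |ψ k x - ψ k y| ≤
          |(1 - (k+1:ℝ) * infDist x F) - (1 - (k+1:ℝ) * infDist y F)| :=
        abs_max_sub_max_le_abs _ _ _
      have h2 : |(1 - (k+1:ℝ) * infDist x F) - (1 - (k+1:ℝ) * infDist y F)|
          = (k+1:ℝ) * |infDist x F - infDist y F| := by
        rw [show (1 - (k+1:ℝ) * infDist x F) - (1 - (k+1:ℝ) * infDist y F)
            = (k+1:ℝ) * (infDist y F - infDist x F) by ring, abs_mul,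
          abs_of_nonneg (by positivity : (0:ℝ) ≤ (k+1:ℝ)), abs_sub_comm]
      have h3 : |infDist x F - infDist y F| ≤ dist x y := by
        rw [abs_sub_le_iff]
        constructor
        · have := infDist_le_infDist_add_dist (x := x) (y := y) (s := F)
          linarith
        · have := infDist_le_infDist_add_dist (x := y) (y := x) (s := F)
          rw [dist_comm] at this
          linarith
      have h4 : dist x y ≤ D * dist x y ^ α := hdistpow x y
      have h5 : (0:ℝ) ≤ (k+1:ℝ) := by positivity
      calc |ψ k x - ψ k y| ≤ (k+1:ℝ) * |infDist x F - infDist y F| := by rw [← h2]; exact h1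
        _ ≤ (k+1:ℝ) * dist x y := by nlinarith
        _ ≤ (k+1:ℝ) * (D * dist x y ^ α) := by nlinarith
        _ = (k+1:ℝ) * D * dist x y ^ α := by ring
    -- pointwise convergence to the indicator
    have hψlim : ∀ x, Tendsto (fun k => g x * ψ k x) atTop (𝓝 (F.indicator g x)) := by
      intro x
      by_cases hx : x ∈ F
      · have heq : (fun k => g x * ψ k x) = fun _ => g x := by
          funext k
          simp [hψdef, infDist_zero_of_mem hx]
        rw [heq, indicator_of_mem hx]
        exact tendsto_const_nhds
      · have hr : 0 < infDist x F := (hF.notMem_iff_infDist_pos hFne).1 hx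
        rw [indicator_of_notMem hx]
        apply Tendsto.congr' _ tendsto_const_nhds
        obtain ⟨N, hN⟩ := exists_nat_gt (1 / infDist x F)
        refine eventually_atTop.2 ⟨N, fun k hk => ?_⟩
        have h1 : (1:ℝ) / infDist x F < (k+1:ℝ) := by
          have : (N:ℝ) ≤ (k:ℝ) := by exact_mod_cast hk
          linarith
        have h2 : (1:ℝ) ≤ (k+1:ℝ) * infDist x F := by
          rw [div_lt_iff₀ hr] at h1
          nlinarith
        have h3 : ψ k x = 0 := by
          show max (1 - (k+1 : ℝ) * infDist x F) 0 = 0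
          rw [max_eq_right]
          linarith
        show (0:ℝ) = g x * ψ k x
        rw [h3, mul_zero]
    -- dominated convergence
    have hdct : Tendsto (fun k => ∫ x, g x * ψ k x ∂μ) atTop
        (𝓝 (∫ x, F.indicator g x ∂μ)) := by
      refine tendsto_integral_of_dominated_convergence (fun x => |g x|)
        (fun k => (hgB.mul (hψcont k).measurable).aestronglyMeasurable)
        hgint.abs (fun k => Eventually.of_forall fun x => ?_)
        (Eventually.of_forall hψlim)
      rw [Real.norm_eq_abs, abs_mul]
      have h1 := hψ0 k x
      have h2 := hψ1 k x
      have h3 : |ψ k x| ≤ 1 := by rw [abs_of_nonneg h1]; exact h2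
      nlinarith [abs_nonneg (g x)]
    -- each correlation integral vanishes
    have hzero : ∀ k, ∫ x, g x * ψ k x ∂μ = 0 := by
      intro k
      have hψint : Integrable (ψ k) μ := by
        have h := (integrable_const (1:ℝ) : Integrable (fun _ : X => (1:ℝ)) μ).bdd_mul (hψcont k).aestronglyMeasurable
          (c := 1) (Eventually.of_forall fun x => by rw [Real.norm_eq_abs, abs_of_nonneg (hψ0 k x)]; exact hψ1 k x)
        simpa using h
      have hint2 : Integrable (fun x => φ x * ψ k x) μ := by
        have h := hφint.bdd_mul (hψcont k).aestronglyMeasurable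
          (c := 1) (Eventually.of_forall fun x => by rw [Real.norm_eq_abs, abs_of_nonneg (hψ0 k x)]; exact hψ1 k x)
        simpa [mul_comm] using h
      have e1 : ∫ x, g x * ψ k x ∂μ
          = (∫ x, φ x * ψ k x ∂μ) - c * ∫ x, ψ k x ∂μ := by
        have heq : (fun x => g x * ψ k x)
            = fun x => φ x * ψ k x - c * ψ k x := by
          funext x; rw [hgdef]; ring
        rw [heq, integral_sub hint2 (hψint.const_mul c), integral_const_mul]
      rw [e1, hKey (ψ k) (hψhold k)]
      ring
    have hlim0 : (∫ x, F.indicator g x ∂μ) = 0 := by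
      have h := hdct
      simp only [hzero] at h
      exact (tendsto_nhds_unique h tendsto_const_nhds)
    rw [← integral_indicator hF.measurableSet]
    exact hlim0
  -- extend to all measurable sets via the π-system of closed sets
  have hgpos : Integrable (fun x => max (g x) 0) μ := hgint.pos_part
  have hgneg : Integrable (fun x => max (-g x) 0) μ := hgint.neg.pos_part
  set ν₁ := μ.withDensity (fun x => ENNReal.ofReal (g x)) with hν₁
  set ν₂ := μ.withDensity (fun x => ENNReal.ofReal (-g x)) with hν₂
  haveI h₁ : IsFiniteMeasure ν₁ := isFiniteMeasure_withDensity_ofReal hgint.hasFiniteIntegral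
  haveI h₂ : IsFiniteMeasure ν₂ := isFiniteMeasure_withDensity_ofReal hgint.neg.hasFiniteIntegral
  have hclosedEq : ∀ F : Set X, IsClosed F → ν₁ F = ν₂ F := by
    intro F hF
    have hFm := hF.measurableSet
    have e1 : ν₁ F = ENNReal.ofReal (∫ x in F, max (g x) 0 ∂μ) := by
      rw [hν₁, withDensity_apply _ hFm,
        ofReal_integral_eq_lintegral_ofReal hgpos.restrict
          (Eventually.of_forall fun x => le_max_right _ _)]
      refine lintegral_congr fun x => ?_
      rcases le_total (g x) 0 with h | h
      · rw [ENNReal.ofReal_of_nonpos h, max_eq_right h]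
        simp
      · rw [max_eq_left h]
    have e2 : ν₂ F = ENNReal.ofReal (∫ x in F, max (-g x) 0 ∂μ) := by
      rw [hν₂, withDensity_apply _ hFm,
        ofReal_integral_eq_lintegral_ofReal hgneg.restrict
          (Eventually.of_forall fun x => le_max_right _ _)]
      refine lintegral_congr fun x => ?_
      rcases le_total (-g x) 0 with h | h
      · rw [ENNReal.ofReal_of_nonpos h, max_eq_right h]
        simp
      · rw [max_eq_left h]
    have e3 : ∫ x in F, max (g x) 0 ∂μ = ∫ x in F, max (-g x) 0 ∂μ := by
      have hdiff : ∫ x in F, (max (g x) 0 - max (-g x) 0) ∂μ = 0 := by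
        have heq : (fun x => max (g x) 0 - max (-g x) 0) = g := by
          funext x
          rcases le_total 0 (g x) with h | h
          · rw [max_eq_left h, max_eq_right (by linarith : -g x ≤ 0)]; ring
          · rw [max_eq_right h, max_eq_left (by linarith : 0 ≤ -g x)]; ring
        rw [heq]
        exact hclosed F hF
      rw [integral_sub hgpos.restrict hgneg.restrict] at hdiff
      linarith
    rw [e1, e2, e3]
  have hext : ν₁ = ν₂ := by
    refine ext_of_generate_finite {s : Set X | IsClosed s} ?_ isPiSystem_isClosed
      (fun s hs => hclosedEq s hs) (hclosedEq _ isClosed_univ)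
    rw [BorelSpace.measurable_eq (α := X), borel_eq_generateFrom_isClosed]
  -- conclude g = 0 a.e.
  have hfin : (∫⁻ x, ENNReal.ofReal (g x) ∂μ) ≠ (⊤ : ENNReal) := by
    have hfi : (∫⁻ x, (‖g x‖₊ : ENNReal) ∂μ) < (⊤ : ENNReal) := hgint.hasFiniteIntegral
    refine ne_of_lt (lt_of_le_of_lt (lintegral_mono fun x => ?_) hfi)
    rw [show ((‖g x‖₊ : ENNReal)) = ENNReal.ofReal ‖g x‖ from (ofReal_norm (g x)).symm, Real.norm_eq_abs]
    exact ENNReal.ofReal_le_ofReal (le_abs_self _)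
  have hae : (fun x => ENNReal.ofReal (g x)) =ᵐ[μ] fun x => ENNReal.ofReal (-g x) := by
    refine (withDensity_eq_iff ?_ ?_ hfin).1 hext
    · exact (ENNReal.measurable_ofReal.comp hgB).aemeasurable
    · exact (ENNReal.measurable_ofReal.comp hgB.neg).aemeasurable
  refine ⟨c, ?_⟩
  filter_upwards [hae] with x hx
  have hg0 : g x = 0 := by
    by_contra hne
    rcases lt_or_gt_of_ne hne with h | h
    · have hl : ENNReal.ofReal (g x) = 0 := ENNReal.ofReal_of_nonpos h.le
      have hr : 0 < ENNReal.ofReal (-g x) := ENNReal.ofReal_pos.2 (by linarith)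
      rw [hx] at hl
      exact absurd hl (ne_of_gt hr)
    · have hl : ENNReal.ofReal (-g x) = 0 := ENNReal.ofReal_of_nonpos (by linarith)
      have hr : 0 < ENNReal.ofReal (g x) := ENNReal.ofReal_pos.2 h
      rw [hx] at hr
      exact absurd hl (ne_of_gt hr)
  have : φ x - c = 0 := hg0
  linarith
end
end
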